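/- arXiv:2002.12733 — 6 statements merged into one kernel-verified Lean document; each statement's English description precedes it below -/
import Mathlib

section
/- There is an absolute constant C (not depending on m, M, n) such that: if V_n ∈ L_n(m,M) and n is sufficiently large, then V_n is invertible and max_{i,j} |(V_n^{−1})_{ij} − s̄_{ij}| ≤ C M²/(m³(n−1)²), where s̄_{ij} = δ_{ij}/v_{ii} − 1/v_{··} and v_{··} = Σ_{i=1}^n v_{ii}. -/
open Finset

/-- The matrix class `L_n(m, M)`: symmetric nonnegative matrices whose diagonal entries equal
the corresponding off-diagonal row sums, with all off-diagonal entries in `[m, M]`. -/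
def MatrixClassL (n : ℕ) (m M : ℝ) (V : Matrix (Fin n) (Fin n) ℝ) : Prop :=
  V.IsSymm ∧ (∀ i, V i i = ∑ j ∈ Finset.univ.erase i, V i j) ∧
    ∀ i j, i ≠ j → m ≤ V i j ∧ V i j ≤ M

section InverseApproxAux

open Matrix

lemma erase_sum_comm' {n : ℕ} (f : Fin n → Fin n → ℝ) :
    ∑ i, ∑ j ∈ Finset.univ.erase i, f i j = ∑ i, ∑ j ∈ Finset.univ.erase i, f j i := by
  rw [Finset.sum_comm' (s := Finset.univ) (t := fun i => Finset.univ.erase i)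
      (t' := Finset.univ) (s' := fun j => Finset.univ.erase j)]
  intro x y
  simp [Finset.mem_erase, ne_comm]

lemma quad_lower' {n : ℕ} {m : ℝ} {V : Matrix (Fin n) (Fin n) ℝ}
    (hm : 0 ≤ m)
    (hsym : ∀ i j, V j i = V i j)
    (hdiag : ∀ i, V i i = ∑ j ∈ Finset.univ.erase i, V i j)
    (hlb : ∀ i j, i ≠ j → m ≤ V i j)
    (x : Fin n → ℝ) :
    m * ((n : ℝ) - 2) * (∑ i, x i ^ 2) ≤ x ⬝ᵥ V.mulVec x := by
  have key : 2 * (x ⬝ᵥ V.mulVec x)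
      = ∑ i, ∑ j ∈ Finset.univ.erase i, V i j * (x i + x j) ^ 2 := by
    have expand : x ⬝ᵥ V.mulVec x = ∑ i, (x i * (V i i * x i)
        + ∑ j ∈ Finset.univ.erase i, x i * (V i j * x j)) := by
      simp only [dotProduct, Matrix.mulVec, Finset.mul_sum]
      refine Finset.sum_congr rfl fun i _ => ?_
      rw [← Finset.add_sum_erase _ _ (Finset.mem_univ i)]
    rw [expand]
    have swap : ∑ i, ∑ j ∈ Finset.univ.erase i, V i j * x j ^ 2
        = ∑ i, ∑ j ∈ Finset.univ.erase i, V i j * x i ^ 2 := by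
      have := erase_sum_comm' (fun i j => V i j * x j ^ 2)
      simpa [hsym] using this
    have lhs_eq : ∀ i, x i * (V i i * x i) + ∑ j ∈ Finset.univ.erase i, x i * (V i j * x j)
        = ∑ j ∈ Finset.univ.erase i, (V i j * x i ^ 2 + x i * (V i j * x j)) := by
      intro i
      rw [Finset.sum_add_distrib]
      congr 1
      rw [hdiag i, Finset.sum_mul, Finset.mul_sum]
      refine Finset.sum_congr rfl fun j _ => by ring
    simp only [lhs_eq]
    rw [Finset.mul_sum]
    simp only [Finset.mul_sum]
    calc ∑ i, ∑ j ∈ Finset.univ.erase i, 2 * (V i j * x i ^ 2 + x i * (V i j * x j))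
        = ∑ i, ∑ j ∈ Finset.univ.erase i,
            ((V i j * (x i + x j) ^ 2) + (V i j * x i ^ 2 - V i j * x j ^ 2)) := by
          refine Finset.sum_congr rfl fun i _ => Finset.sum_congr rfl fun j _ => by ring
      _ = (∑ i, ∑ j ∈ Finset.univ.erase i, V i j * (x i + x j) ^ 2)
          + ((∑ i, ∑ j ∈ Finset.univ.erase i, V i j * x i ^ 2)
            - (∑ i, ∑ j ∈ Finset.univ.erase i, V i j * x j ^ 2)) := by
          simp [Finset.sum_add_distrib, Finset.sum_sub_distrib]
      _ = ∑ i, ∑ j ∈ Finset.univ.erase i, V i j * (x i + x j) ^ 2 := by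
          rw [swap]; ring
  set S := ∑ i, x i ^ 2 with hS
  set T := ∑ i, x i with hT
  have inner : ∀ i : Fin n, ∑ j ∈ Finset.univ.erase i, (x i + x j) ^ 2
      = ((n : ℝ) - 4) * x i ^ 2 + (2 * T) * x i + S := by
    intro i
    rw [Finset.sum_erase_eq_sub (Finset.mem_univ i)]
    have e : ∑ j, (x i + x j) ^ 2 = ∑ j, (x i ^ 2 + ((2 * x i) * x j + x j ^ 2)) :=
      Finset.sum_congr rfl fun j _ => by ring
    rw [e, Finset.sum_add_distrib, Finset.sum_add_distrib, Finset.sum_const,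
      Finset.card_univ, Fintype.card_fin, nsmul_eq_mul, ← Finset.mul_sum, ← hS, ← hT]
    ring
  have hsum : ∑ i, ∑ j ∈ Finset.univ.erase i, (x i + x j) ^ 2
      = 2 * (n : ℝ) * S + 2 * T ^ 2 - 4 * S := by
    calc ∑ i, ∑ j ∈ Finset.univ.erase i, (x i + x j) ^ 2
        = ∑ i, (((n : ℝ) - 4) * x i ^ 2 + (2 * T) * x i + S) :=
          Finset.sum_congr rfl fun i _ => inner i
      _ = (((n : ℝ) - 4) * S + (2 * T) * T) + (n : ℝ) * S := by
          rw [Finset.sum_add_distrib, Finset.sum_add_distrib, ← Finset.mul_sum,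
            ← Finset.mul_sum, ← hS, ← hT, Finset.sum_const, Finset.card_univ,
            Fintype.card_fin, nsmul_eq_mul]
      _ = 2 * (n : ℝ) * S + 2 * T ^ 2 - 4 * S := by ring
  have hQB : m * (2 * (n : ℝ) * S + 2 * T ^ 2 - 4 * S) ≤ 2 * (x ⬝ᵥ V.mulVec x) := by
    rw [key, ← hsum, Finset.mul_sum]
    refine Finset.sum_le_sum fun i _ => ?_
    rw [Finset.mul_sum]
    refine Finset.sum_le_sum fun j hj => ?_
    have hij : i ≠ j := fun h => (Finset.mem_erase.mp hj).1 h.symm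
    exact mul_le_mul_of_nonneg_right (hlb i j hij) (sq_nonneg _)
  nlinarith [mul_nonneg hm (sq_nonneg T)]

lemma inv_bound' {n : ℕ} {c : ℝ} {V : Matrix (Fin n) (Fin n) ℝ} (hc : 0 < c)
    (hq : ∀ x : Fin n → ℝ, c * (∑ i, x i ^ 2) ≤ x ⬝ᵥ V.mulVec x) :
    IsUnit V.det ∧ ∀ u w : Fin n → ℝ,
      (u ⬝ᵥ V⁻¹.mulVec w) ^ 2 ≤ (∑ i, u i ^ 2) * (∑ i, w i ^ 2) / c ^ 2 := by
  have hinj : Function.Injective V.mulVec := by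
    intro a b hab
    have h0 : V.mulVec (a - b) = 0 := by rw [Matrix.mulVec_sub, hab, sub_self]
    have h1 : c * (∑ i, (a - b) i ^ 2) ≤ 0 := by
      have := hq (a - b)
      rwa [h0, dotProduct_zero] at this
    have h2 : ∑ i, (a - b) i ^ 2 ≤ 0 := nonpos_of_mul_nonpos_right ?_ hc
    · have h3 : ∑ i, (a - b) i ^ 2 = 0 :=
        le_antisymm h2 (Finset.sum_nonneg fun i _ => sq_nonneg _)
      have h4 : ∀ i ∈ Finset.univ, (a - b) i ^ 2 = 0 :=
        (Finset.sum_eq_zero_iff_of_nonneg fun i _ => sq_nonneg _).mp h3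
      funext i
      have h5 : (a - b) i = 0 :=
        pow_eq_zero_iff (n := 2) (by norm_num) |>.mp (h4 i (Finset.mem_univ i))
      simpa [sub_eq_zero] using h5
    · linarith [h1]
  have hdet : IsUnit V.det :=
    (Matrix.isUnit_iff_isUnit_det V).mp (Matrix.mulVec_injective_iff_isUnit.mp hinj)
  refine ⟨hdet, fun u w => ?_⟩
  set y := V⁻¹.mulVec w with hy
  have hVy : V.mulVec y = w := by
    rw [hy, Matrix.mulVec_mulVec, Matrix.mul_nonsing_inv V hdet, Matrix.one_mulVec]
  set Sy := ∑ i, y i ^ 2 with hSy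
  set Sw := ∑ i, w i ^ 2 with hSw
  set Su := ∑ i, u i ^ 2 with hSu
  have hSy0 : 0 ≤ Sy := Finset.sum_nonneg fun i _ => sq_nonneg _
  have hSw0 : 0 ≤ Sw := Finset.sum_nonneg fun i _ => sq_nonneg _
  have hSu0 : 0 ≤ Su := Finset.sum_nonneg fun i _ => sq_nonneg _
  have h1 : c * Sy ≤ y ⬝ᵥ w := by have := hq y; rwa [hVy] at this
  have h2 : (y ⬝ᵥ w) ^ 2 ≤ Sy * Sw := by
    simpa [dotProduct] using Finset.sum_mul_sq_le_sq_mul_sq Finset.univ y w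
  have h3 : c ^ 2 * Sy ≤ Sw := by
    rcases eq_or_lt_of_le hSy0 with h | h
    · rw [← h]; simpa using hSw0
    · have hcy : 0 ≤ c * Sy := mul_nonneg hc.le hSy0
      have hsq : (c * Sy) * (c * Sy) ≤ (y ⬝ᵥ w) * (y ⬝ᵥ w) :=
        mul_le_mul h1 h1 hcy (hcy.trans h1)
      nlinarith [hsq, h2, h]
  have h4 : (u ⬝ᵥ y) ^ 2 ≤ Su * Sy := by
    simpa [dotProduct] using Finset.sum_mul_sq_le_sq_mul_sq Finset.univ u y
  rw [le_div_iff₀ (by positivity)]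
  nlinarith [mul_le_mul_of_nonneg_right h4 (sq_nonneg c), mul_le_mul_of_nonneg_left h3 hSu0]

end InverseApproxAux

set_option maxHeartbeats 1000000 in
/-- There is an absolute constant `C` (independent of `m`, `M`, `n`) such that
for all sufficiently large `n`, every `V ∈ L_n(m,M)` is invertible and
`max_{i,j} |(V⁻¹)_{ij} - s̄_{ij}| ≤ C M²/(m³ (n-1)²)`, where
`s̄_{ij} = δ_{ij}/v_{ii} - 1/v_{··}` and `v_{··} = Σ_i v_{ii}`. -/
theorem inverse_approximation_Ln :
    ∃ C : ℝ, 0 < C ∧ ∃ N : ℕ, ∀ n : ℕ, N ≤ n →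
      ∀ m M : ℝ, 0 < m → m ≤ M →
      ∀ V : Matrix (Fin n) (Fin n) ℝ, MatrixClassL n m M V →
        IsUnit V.det ∧
        ∀ i j : Fin n,
          |V⁻¹ i j - ((if i = j then (V i i)⁻¹ else 0) - (∑ k, V k k)⁻¹)|
            ≤ C * M ^ 2 / (m ^ 3 * ((n : ℝ) - 1) ^ 2) := by
  refine ⟨4, by norm_num, 4, fun n hn m M hm hmM V hV => ?_⟩
  obtain ⟨hsymm, hdiag, hoff⟩ := hV
  have hsym : ∀ i j, V j i = V i j := fun i j => hsymm.apply i j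
  have hM : 0 < M := lt_of_lt_of_le hm hmM
  have hn4 : (4 : ℝ) ≤ (n : ℝ) := by exact_mod_cast hn
  set a : ℝ := (n : ℝ) - 1 with ha
  set b : ℝ := (n : ℝ) - 2 with hb
  have hapos : 0 < a := by rw [ha]; linarith
  have hbpos : 0 < b := by rw [hb]; linarith
  have hab : a ≤ 2 * b := by rw [ha, hb]; linarith
  have han : a ≤ (n : ℝ) := by rw [ha]; linarith
  have hnpos : (0 : ℝ) < (n : ℝ) := by linarith
  -- diagonal lower bound
  have hdlb : ∀ i, m * a ≤ V i i := by
    intro i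
    have hcard : ((Finset.univ.erase i).card : ℝ) = a := by
      rw [Finset.card_erase_of_mem (Finset.mem_univ i), Finset.card_univ, Fintype.card_fin,
        Nat.cast_sub (by omega), ha]
      norm_num
    rw [hdiag i]
    calc m * a = ((Finset.univ.erase i).card : ℝ) * m := by rw [hcard]; ring
      _ ≤ ∑ j ∈ Finset.univ.erase i, V i j := by
          rw [← nsmul_eq_mul]
          exact Finset.card_nsmul_le_sum _ _ _ fun j hj =>
            (hoff i j (fun h => (Finset.mem_erase.mp hj).1 h.symm)).1
  have hdpos : ∀ i, 0 < V i i := fun i => lt_of_lt_of_le (by positivity) (hdlb i)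
  -- invertibility and bilinear bound on the inverse
  have hcpos : 0 < m * ((n : ℝ) - 2) := by
    have : (0:ℝ) < (n : ℝ) - 2 := by linarith
    positivity
  obtain ⟨hdet, hbil⟩ := inv_bound' hcpos
    (quad_lower' hm.le hsym hdiag (fun i j h => (hoff i j h).1))
  refine ⟨hdet, fun i j => ?_⟩
  -- resolvent identity
  set D := Matrix.diagonal (fun k => V k k) with hD
  set E := Matrix.diagonal (fun k => (V k k)⁻¹) with hE
  have hDE : D * E = 1 := by
    rw [hD, hE, Matrix.diagonal_mul_diagonal]
    have : (fun k => V k k * (V k k)⁻¹) = fun _ : Fin n => (1 : ℝ) :=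
      funext fun k => mul_inv_cancel₀ (hdpos k).ne'
    rw [this, Matrix.diagonal_one]
  have hED : E * D = 1 := by
    rw [hD, hE, Matrix.diagonal_mul_diagonal]
    have : (fun k => (V k k)⁻¹ * V k k) = fun _ : Fin n => (1 : ℝ) :=
      funext fun k => inv_mul_cancel₀ (hdpos k).ne'
    rw [this, Matrix.diagonal_one]
  set W := V - D with hWdef
  have hDW : D + W = V := by rw [hWdef]; abel
  have hViV : V⁻¹ * V = 1 := Matrix.nonsing_inv_mul V hdet
  have hVVi : V * V⁻¹ = 1 := Matrix.mul_nonsing_inv V hdet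
  have key : V⁻¹ = E - E * W * E + E * (W * V⁻¹ * W) * E := by
    have h1 : V⁻¹ = E - V⁻¹ * W * E := by
      have t : V⁻¹ * D * E + V⁻¹ * W * E = E := by
        rw [← add_mul, ← mul_add, hDW, hViV, one_mul]
      rw [mul_assoc, hDE, mul_one] at t
      exact eq_sub_of_add_eq t
    have h2 : V⁻¹ = E - E * W * V⁻¹ := by
      have t : E * D * V⁻¹ + E * W * V⁻¹ = E := by
        rw [← add_mul, ← mul_add, hDW, mul_assoc, hVVi, mul_one]
      rw [hED, one_mul] at t
      exact eq_sub_of_add_eq t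
    conv_lhs => rw [h1, h2]
    noncomm_ring
  -- entrywise form
  have happ : V⁻¹ i j = (if i = j then (V i i)⁻¹ else 0)
      - (V i i)⁻¹ * W i j * (V j j)⁻¹
      + (V i i)⁻¹ * ((W * V⁻¹ * W) i j) * (V j j)⁻¹ := by
    have h := congrFun (congrFun key i) j
    rw [Matrix.add_apply, Matrix.sub_apply] at h
    rw [h, hE, Matrix.mul_diagonal, Matrix.mul_diagonal, Matrix.diagonal_mul,
      Matrix.diagonal_mul, Matrix.diagonal_apply]
  set t := dotProduct (fun k => W i k) (V⁻¹.mulVec (fun k => W k j)) with htdef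
  have hWVW : (W * V⁻¹ * W) i j = t := by
    rw [htdef]
    simp only [Matrix.mul_apply, dotProduct, Matrix.mulVec, Finset.sum_mul,
      Finset.mul_sum]
    rw [Finset.sum_comm]
    exact Finset.sum_congr rfl fun k _ => Finset.sum_congr rfl fun l _ => by ring
  -- entry bounds on W
  have hWentry : ∀ k l, W k l = if k = l then 0 else V k l := by
    intro k l
    rw [hWdef, Matrix.sub_apply, hD, Matrix.diagonal_apply]
    by_cases h : k = l <;> simp [h]
  have hWnn : ∀ k l, 0 ≤ W k l := by
    intro k l
    rw [hWentry]
    by_cases h : k = l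
    · simp [h]
    · simpa [h] using le_trans hm.le (hoff k l h).1
  have hWle : ∀ k l, W k l ≤ M := by
    intro k l
    rw [hWentry]
    by_cases h : k = l
    · simpa [h] using hM.le
    · simpa [h] using (hoff k l h).2
  have hWsq : ∀ k l, (W k l) ^ 2 ≤ M ^ 2 := fun k l => by
    nlinarith [hWnn k l, hWle k l]
  have hrow : ∑ k, (W i k) ^ 2 ≤ a * M ^ 2 := by
    have hcard : ((Finset.univ : Finset (Fin n)).card : ℝ) = (n : ℝ) := by
      rw [Finset.card_univ, Fintype.card_fin]
    calc ∑ k, (W i k) ^ 2 = ∑ k ∈ Finset.univ.erase i, (W i k) ^ 2 := by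
          rw [← Finset.add_sum_erase _ _ (Finset.mem_univ i)]
          simp [hWentry i i]
      _ ≤ ((Finset.univ.erase i).card : ℝ) * M ^ 2 := by
          rw [← nsmul_eq_mul]
          exact Finset.sum_le_card_nsmul _ _ _ fun k _ => hWsq i k
      _ = a * M ^ 2 := by
          rw [Finset.card_erase_of_mem (Finset.mem_univ i), Finset.card_univ, Fintype.card_fin,
            Nat.cast_sub (by omega), ha]
          norm_num
  have hcol : ∑ k, (W k j) ^ 2 ≤ a * M ^ 2 := by
    calc ∑ k, (W k j) ^ 2 = ∑ k ∈ Finset.univ.erase j, (W k j) ^ 2 := by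
          rw [← Finset.add_sum_erase _ _ (Finset.mem_univ j)]
          simp [hWentry j j]
      _ ≤ ((Finset.univ.erase j).card : ℝ) * M ^ 2 := by
          rw [← nsmul_eq_mul]
          exact Finset.sum_le_card_nsmul _ _ _ fun k _ => hWsq k j
      _ = a * M ^ 2 := by
          rw [Finset.card_erase_of_mem (Finset.mem_univ j), Finset.card_univ, Fintype.card_fin,
            Nat.cast_sub (by omega), ha]
          norm_num
  -- bound on the bilinear term t
  have htabs : |t| ≤ a * M ^ 2 / (m * b) := by
    have ht2 : t ^ 2 ≤ (a * M ^ 2) * (a * M ^ 2) / (m * ((n : ℝ) - 2)) ^ 2 := by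
      refine le_trans (hbil _ _) ?_
      have hnum : (∑ k, (W i k) ^ 2) * (∑ k, (W k j) ^ 2) ≤ (a * M ^ 2) * (a * M ^ 2) :=
        mul_le_mul hrow hcol (Finset.sum_nonneg fun k _ => sq_nonneg _) (by positivity)
      exact div_le_div_of_nonneg_right hnum (by positivity) |>.trans_eq rfl
    have hB : (0 : ℝ) ≤ a * M ^ 2 / (m * b) := by positivity
    have ht2' : t ^ 2 ≤ (a * M ^ 2 / (m * b)) ^ 2 := by
      rw [div_pow, show (a * M ^ 2) ^ 2 = (a * M ^ 2) * (a * M ^ 2) from by ring,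
        show (m * b) ^ 2 = (m * ((n : ℝ) - 2)) ^ 2 from by rw [hb]]
      exact ht2
    nlinarith [sq_abs t, abs_nonneg t, hB, ht2']
  -- inverse-diagonal bounds
  have hinv1 : ∀ k, (V k k)⁻¹ ≤ (m * a)⁻¹ :=
    fun k => inv_anti₀ (by positivity) (hdlb k)
  have hinvnn : ∀ k, (0 : ℝ) ≤ (V k k)⁻¹ := fun k => inv_nonneg.mpr (hdpos k).le
  have htr : m * ((n : ℝ) * a) ≤ ∑ k, V k k := by
    have hcard : ((Finset.univ : Finset (Fin n)).card : ℝ) = (n : ℝ) := by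
      rw [Finset.card_univ, Fintype.card_fin]
    calc m * ((n : ℝ) * a) = ((Finset.univ : Finset (Fin n)).card : ℝ) * (m * a) := by
          rw [hcard]; ring
      _ ≤ ∑ k, V k k := by
          rw [← nsmul_eq_mul]
          exact Finset.card_nsmul_le_sum _ _ _ fun k _ => hdlb k
  have htrinv : (∑ k, V k k)⁻¹ ≤ (m * ((n : ℝ) * a))⁻¹ :=
    inv_anti₀ (by positivity) htr
  have htrnn : (0 : ℝ) ≤ (∑ k, V k k)⁻¹ := by
    have : (0:ℝ) < ∑ k, V k k := lt_of_lt_of_le (by positivity) htr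
    positivity
  -- split the target
  have split : V⁻¹ i j - ((if i = j then (V i i)⁻¹ else 0) - (∑ k, V k k)⁻¹)
      = (-((V i i)⁻¹ * W i j * (V j j)⁻¹) + (V i i)⁻¹ * t * (V j j)⁻¹) + (∑ k, V k k)⁻¹ := by
    rw [happ, hWVW]; ring
  rw [split]
  -- bounds on the three pieces
  have B1 : |(V i i)⁻¹ * W i j * (V j j)⁻¹| ≤ (m * a)⁻¹ * M * (m * a)⁻¹ := by
    rw [abs_of_nonneg (mul_nonneg (mul_nonneg (hinvnn i) (hWnn i j)) (hinvnn j))]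
    exact mul_le_mul (mul_le_mul (hinv1 i) (hWle i j) (hWnn i j) (by positivity))
      (hinv1 j) (hinvnn j) (by positivity)
  have B2 : |(V i i)⁻¹ * t * (V j j)⁻¹| ≤ (m * a)⁻¹ * (a * M ^ 2 / (m * b)) * (m * a)⁻¹ := by
    rw [abs_mul, abs_mul, abs_of_nonneg (hinvnn i), abs_of_nonneg (hinvnn j)]
    exact mul_le_mul (mul_le_mul (hinv1 i) htabs (abs_nonneg t) (by positivity))
      (hinv1 j) (hinvnn j) (by positivity)
  have B3 : |(∑ k, V k k)⁻¹| ≤ (m * ((n : ℝ) * a))⁻¹ := by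
    rw [abs_of_nonneg htrnn]; exact htrinv
  -- numeric comparisons
  have hm0 : m ≠ 0 := hm.ne'
  have ha0 : a ≠ 0 := hapos.ne'
  have hb0 : b ≠ 0 := hbpos.ne'
  have N1 : (m * a)⁻¹ * M * (m * a)⁻¹ ≤ M ^ 2 / (m ^ 3 * a ^ 2) := by
    have e1 : (m * a)⁻¹ * M * (m * a)⁻¹ = M / (m ^ 2 * a ^ 2) := by
      field_simp
    rw [e1, div_le_div_iff₀ (by positivity) (by positivity)]
    nlinarith [mul_le_mul_of_nonneg_left (mul_le_mul_of_nonneg_left hmM hM.le)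
      (show (0:ℝ) ≤ m ^ 2 * a ^ 2 by positivity)]
  have N2 : (m * a)⁻¹ * (a * M ^ 2 / (m * b)) * (m * a)⁻¹ ≤ 2 * M ^ 2 / (m ^ 3 * a ^ 2) := by
    have e2 : (m * a)⁻¹ * (a * M ^ 2 / (m * b)) * (m * a)⁻¹ = M ^ 2 / (m ^ 3 * (a * b)) := by
      field_simp
    rw [e2, div_le_div_iff₀ (by positivity) (by positivity)]
    nlinarith [mul_le_mul_of_nonneg_left (mul_le_mul_of_nonneg_left hab hapos.le)
      (show (0:ℝ) ≤ M ^ 2 * m ^ 3 by positivity)]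
  have N3 : (m * ((n : ℝ) * a))⁻¹ ≤ M ^ 2 / (m ^ 3 * a ^ 2) := by
    rw [show (m * ((n : ℝ) * a))⁻¹ = 1 / (m * ((n : ℝ) * a)) from (one_div _).symm,
      div_le_div_iff₀ (by positivity) (by positivity)]
    have hmma : m * m * a ≤ M * M * (n : ℝ) :=
      mul_le_mul (mul_le_mul hmM hmM hm.le hM.le) han hapos.le (by positivity)
    nlinarith [mul_le_mul_of_nonneg_left hmma (show (0:ℝ) ≤ m * a by positivity)]
  -- triangle inequality and conclusion
  have tri : |(-((V i i)⁻¹ * W i j * (V j j)⁻¹) + (V i i)⁻¹ * t * (V j j)⁻¹) + (∑ k, V k k)⁻¹|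
      ≤ |(V i i)⁻¹ * W i j * (V j j)⁻¹| + |(V i i)⁻¹ * t * (V j j)⁻¹| + |(∑ k, V k k)⁻¹| := by
    calc |(-((V i i)⁻¹ * W i j * (V j j)⁻¹) + (V i i)⁻¹ * t * (V j j)⁻¹) + (∑ k, V k k)⁻¹|
        ≤ |(-((V i i)⁻¹ * W i j * (V j j)⁻¹) + (V i i)⁻¹ * t * (V j j)⁻¹)| + |(∑ k, V k k)⁻¹| :=
          abs_add_le _ _
      _ ≤ _ := by
          have h := abs_add_le (-((V i i)⁻¹ * W i j * (V j j)⁻¹)) ((V i i)⁻¹ * t * (V j j)⁻¹)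
          rw [abs_neg] at h
          linarith
  have final : M ^ 2 / (m ^ 3 * a ^ 2) + 2 * M ^ 2 / (m ^ 3 * a ^ 2) + M ^ 2 / (m ^ 3 * a ^ 2)
      = 4 * M ^ 2 / (m ^ 3 * a ^ 2) := by ring
  calc |(-((V i i)⁻¹ * W i j * (V j j)⁻¹) + (V i i)⁻¹ * t * (V j j)⁻¹) + (∑ k, V k k)⁻¹|
      ≤ |(V i i)⁻¹ * W i j * (V j j)⁻¹| + |(V i i)⁻¹ * t * (V j j)⁻¹| + |(∑ k, V k k)⁻¹| := tri
    _ ≤ (m * a)⁻¹ * M * (m * a)⁻¹ + (m * a)⁻¹ * (a * M ^ 2 / (m * b)) * (m * a)⁻¹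
        + (m * ((n : ℝ) * a))⁻¹ := by linarith [B1, B2, B3]
    _ ≤ M ^ 2 / (m ^ 3 * a ^ 2) + 2 * M ^ 2 / (m ^ 3 * a ^ 2) + M ^ 2 / (m ^ 3 * a ^ 2) := by
        linarith [N1, N2, N3]
    _ = 4 * M ^ 2 / (m ^ 3 * a ^ 2) := final
end

section
/- In the generalized β-model with the discrete Laplace mechanism (λ_n = exp(−ε_n/2)), if ε_n = Ω(√(log n)) (specifically ε_n ≥ c√(log n) with c ≥ 4), then with probability approaching one as n → ∞, max_{1≤i≤n} |d̄_i − E(d_i)| ≤ 2(q−1)√((n−1) log(n−1)). -/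
open MeasureTheory ProbabilityTheory Filter

/-- Probability mass function of the discrete Laplace distribution with parameter `lam`. -/
noncomputable def discreteLaplacePMF (lam : ℝ) (z : ℤ) : ℝ :=
  (1 - lam) / (1 + lam) * lam ^ z.natAbs

-- helper lemmas
section Helpers
open Real

lemma log_facts {x : ℝ} (hx : 325 ≤ x) :
    1 ≤ Real.log x ∧ 9 * Real.log x ≤ x ∧ 18 ≤ Real.sqrt x := by
  have hx0 : (0:ℝ) < x := by linarith
  have h18 : 18 ≤ Real.sqrt x := by
    have : Real.sqrt 324 ≤ Real.sqrt x := Real.sqrt_le_sqrt (by linarith)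
    have h324 : Real.sqrt 324 = 18 := by
      rw [show (324:ℝ) = 18^2 by norm_num, Real.sqrt_sq (by norm_num : (0:ℝ) ≤ 18)]
    linarith
  refine ⟨?_, ?_, h18⟩
  · rw [Real.le_log_iff_exp_le hx0]
    have := Real.exp_one_lt_d9
    linarith
  · have hs0 : 0 < Real.sqrt x := by linarith
    have hlog : Real.log (Real.sqrt x) ≤ Real.sqrt x - 1 :=
      Real.log_le_sub_one_of_pos hs0
    have hhalf : Real.log (Real.sqrt x) = Real.log x / 2 := Real.log_sqrt hx0.le
    have hms : Real.sqrt x * Real.sqrt x = x := Real.mul_self_sqrt hx0.le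
    nlinarith

variable {Ω' : Type*} [MeasurableSpace Ω'] {μ' : Measure Ω'}

lemma integrable_of_abs_le [IsFiniteMeasure μ'] {f : Ω' → ℝ} (hf : Measurable f)
    {C : ℝ} (h : ∀ ω, |f ω| ≤ C) : Integrable f μ' := by
  refine (integrable_const C).mono' hf.aestronglyMeasurable ?_
  exact Filter.Eventually.of_forall (fun ω => by simpa using h ω)

lemma geom_abs_sum (lam : ℝ) (K : ℕ) :
    ∑ z ∈ Finset.Icc (-(K:ℤ)) (K:ℤ), lam ^ z.natAbs
      = 2 * (∑ j ∈ Finset.range (K+1), lam ^ j) - 1 := by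
  induction K with
  | zero => norm_num
  | succ K ih =>
    have hins : Finset.Icc (-((K:ℤ)+1)) ((K:ℤ)+1)
        = insert (-((K:ℤ)+1)) (insert (((K:ℤ)+1)) (Finset.Icc (-(K:ℤ)) (K:ℤ))) := by
      ext z
      simp only [Finset.mem_Icc, Finset.mem_insert]
      omega
    have h1 : (-((K:ℤ)+1)) ∉ insert (((K:ℤ)+1)) (Finset.Icc (-(K:ℤ)) (K:ℤ)) := by
      simp only [Finset.mem_insert, Finset.mem_Icc]
      omega
    have h2 : (((K:ℤ)+1)) ∉ Finset.Icc (-(K:ℤ)) (K:ℤ) := by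
      simp only [Finset.mem_Icc]; omega
    have e1 : (-((K:ℤ)+1)).natAbs = K+1 := by omega
    have e2 : (((K:ℤ)+1)).natAbs = K+1 := by omega
    have hc : (((K+1:ℕ)):ℤ) = (K:ℤ)+1 := by push_cast; ring
    rw [hc, hins, Finset.sum_insert h1, Finset.sum_insert h2, ih, e1, e2,
        Finset.sum_range_succ (f := fun j => lam ^ j) (n := K+1)]
    ring

lemma laplace_icc_sum {lam : ℝ} (h0 : 0 < lam) (h1 : lam < 1) (K : ℕ) :
    ∑ z ∈ Finset.Icc (-(K:ℤ)) (K:ℤ), discreteLaplacePMF lam z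
      = 1 - 2 * lam^(K+1) / (1 + lam) := by
  have hgeo : (∑ j ∈ Finset.range (K+1), lam ^ j) = (lam^(K+1) - 1)/(lam - 1) :=
    geom_sum_eq (ne_of_lt h1) (K+1)
  have hsum : ∑ z ∈ Finset.Icc (-(K:ℤ)) (K:ℤ), discreteLaplacePMF lam z
      = (1 - lam) / (1 + lam) * (2 * ((lam^(K+1) - 1)/(lam - 1)) - 1) := by
    simp only [discreteLaplacePMF, ← Finset.mul_sum]
    rw [geom_abs_sum, hgeo]
  rw [hsum]
  have hne1 : lam - 1 ≠ 0 := by linarith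
  have hne2 : (1:ℝ) + lam ≠ 0 := by linarith
  field_simp
  ring

lemma noise_tail {Ω'' : Type*} [MeasurableSpace Ω''] {ν : Measure Ω''}
    [IsProbabilityMeasure ν] (e : Ω'' → ℤ) (he : Measurable e)
    {lam : ℝ} (h0 : 0 < lam) (h1 : lam < 1)
    (hlaw : ∀ z : ℤ, ν {ω | e ω = z} = ENNReal.ofReal (discreteLaplacePMF lam z))
    (u : ℝ) (hu : 0 ≤ u) :
    ν {ω | u < |((e ω : ℤ) : ℝ)|} ≤ ENNReal.ofReal (2 * lam ^ (Nat.floor u + 1)) := by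
  set K := Nat.floor u with hK
  set E0 : Set Ω'' := ⋃ z ∈ Finset.Icc (-(K:ℤ)) (K:ℤ), {ω | e ω = z} with hE0def
  have hms : ∀ z : ℤ, MeasurableSet {ω | e ω = z} := fun z => he (measurableSet_singleton z)
  have hmeasE0 : MeasurableSet E0 :=
    Finset.measurableSet_biUnion _ (fun z _ => hms z)
  have hsub : {ω | u < |((e ω : ℤ) : ℝ)|} ⊆ E0ᶜ := by
    intro ω hω hmem
    simp only [hE0def, Set.mem_iUnion, Set.mem_setOf_eq, Finset.mem_Icc] at hmem
    obtain ⟨z, ⟨hz1, hz2⟩, hez⟩ := hmem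
    have habs : |((e ω : ℤ) : ℝ)| ≤ (K:ℝ) := by
      rw [hez]
      rw [abs_le]
      constructor <;> [exact_mod_cast hz1; exact_mod_cast hz2]
    have hKu : (K:ℝ) ≤ u := Nat.floor_le hu
    simp only [Set.mem_setOf_eq] at hω
    linarith
  set w : ℝ := 2 * lam^(K+1) / (1 + lam) with hw
  have hlampow : lam^(K+1) ≤ lam := by
    calc lam^(K+1) ≤ lam^1 := pow_le_pow_of_le_one h0.le h1.le (by omega)
      _ = lam := pow_one lam
  have hw0 : 0 ≤ w := by positivity
  have hw1 : w ≤ 1 := by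
    rw [hw, div_le_one (by linarith)]
    linarith
  have hE0 : ν E0 = ENNReal.ofReal (1 - w) := by
    rw [hE0def, measure_biUnion_finset]
    · rw [Finset.sum_congr rfl (fun z _ => hlaw z)]
      rw [← ENNReal.ofReal_sum_of_nonneg]
      · rw [laplace_icc_sum h0 h1 K]
      · intro z _
        unfold discreteLaplacePMF
        have : (0:ℝ) ≤ (1 - lam)/(1 + lam) := div_nonneg (by linarith) (by linarith)
        exact mul_nonneg this (pow_nonneg h0.le _)
    · intro z _ z' _ hzz'
      simp only [Function.onFun]
      apply Set.disjoint_left.mpr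
      intro ω h1' h2'
      simp only [Set.mem_setOf_eq] at h1' h2'
      exact hzz' (h1' ▸ h2' ▸ rfl)
    · exact fun z _ => hms z
  calc ν {ω | u < |((e ω : ℤ) : ℝ)|} ≤ ν E0ᶜ := measure_mono hsub
    _ = 1 - ν E0 := prob_compl_eq_one_sub hmeasE0
    _ = 1 - ENNReal.ofReal (1 - w) := by rw [hE0]
    _ ≤ ENNReal.ofReal w := by
        rw [tsub_le_iff_right]
        rw [← ENNReal.ofReal_add hw0 (by linarith)]
        rw [show w + (1 - w) = 1 by ring]
        simp
    _ ≤ ENNReal.ofReal (2 * lam ^ (K+1)) := by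
        apply ENNReal.ofReal_le_ofReal
        rw [hw]
        apply div_le_self (by positivity) (by linarith)

lemma exp_le_one_add_sq {x : ℝ} (h : |x| ≤ 1) : Real.exp x ≤ 1 + x + x^2 := by
  have hb := Real.exp_bound h (by norm_num : 0 < 3)
  have h1 : Real.exp x - ∑ i ∈ Finset.range 3, x ^ i / i.factorial
      ≤ |x|^3 * ((3:ℕ).succ / ((3:ℕ).factorial * 3)) := (abs_le.mp hb).2
  have h2 : (∑ i ∈ Finset.range 3, x ^ i / i.factorial) = 1 + x + x^2/2 := by
    norm_num [Finset.sum_range_succ, Nat.factorial]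
  have h3 : |x|^3 ≤ x^2 := by
    have : |x|^3 ≤ |x|^2 := pow_le_pow_of_le_one (abs_nonneg x) h (by norm_num)
    simpa [sq_abs] using this
  have h4 : ((3:ℕ).succ : ℝ) / (((3:ℕ).factorial : ℝ) * 3) = 2/9 := by
    norm_num [Nat.factorial]
  rw [h2] at h1
  rw [h4] at h1
  nlinarith [h3]

lemma fin_range_integral [IsProbabilityMeasure μ'] (X : Ω' → ℕ) (hX : Measurable X)
    (q : ℕ) (hr : ∀ ω, X ω < q) (f : ℕ → ℝ) :
    ∫ ω, f (X ω) ∂μ' = ∑ k ∈ Finset.range q, (μ' {ω | X ω = k}).toReal * f k := by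
  have hms : ∀ k : ℕ, MeasurableSet {ω | X ω = k} := fun k => hX (measurableSet_singleton k)
  have hfun : (fun ω => f (X ω)) =
      fun ω => ∑ k ∈ Finset.range q, Set.indicator {ω' | X ω' = k} (fun _ => f k) ω := by
    funext ω
    rw [Finset.sum_eq_single (X ω)]
    · simp [Set.indicator_of_mem, Set.mem_setOf_eq]
    · intro k _ hk
      exact Set.indicator_of_notMem (fun h => hk (h.symm)) _
    · intro h
      exact absurd (Finset.mem_range.mpr (hr ω)) h
  rw [hfun, integral_finset_sum]
  · refine Finset.sum_congr rfl (fun k _ => ?_)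
    rw [integral_indicator_const _ (hms k)]
    exact smul_eq_mul _ _
  · intro k _
    exact (integrable_const (f k)).indicator (hms k)

lemma mgf_bound_discrete [IsProbabilityMeasure μ'] (X : Ω' → ℕ) (hX : Measurable X)
    (q : ℕ) (hq : 1 ≤ q) (hr : ∀ ω, X ω < q) (θ : ℝ)
    (hθ : |θ| * ((q:ℝ)-1) ≤ 1) :
    ProbabilityTheory.mgf (fun ω => (X ω : ℝ) - ∫ ω', (X ω' : ℝ) ∂μ') μ' θ
      ≤ Real.exp (θ^2 * ((q:ℝ)-1)^2/4) := by
  set b : ℝ := (q:ℝ) - 1 with hbdef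
  have hb0 : 0 ≤ b := by
    have : (1:ℝ) ≤ (q:ℝ) := by exact_mod_cast hq
    simp [hbdef]; linarith
  set p : ℕ → ℝ := fun k => (μ' {ω | X ω = k}).toReal with hpdef
  have hp : ∀ k, 0 ≤ p k := fun k => ENNReal.toReal_nonneg
  have hsum1 : ∑ k ∈ Finset.range q, p k = 1 := by
    have h := fin_range_integral (μ' := μ') X hX q hr (fun _ => 1)
    simp [integral_const] at h
    simpa using h.symm
  set m1 : ℝ := ∫ ω', (X ω' : ℝ) ∂μ' with hm1def
  have hm1 : m1 = ∑ k ∈ Finset.range q, p k * (k:ℝ) :=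
    fin_range_integral (μ' := μ') X hX q hr (fun k => (k:ℝ))
  have hkb : ∀ k ∈ Finset.range q, (k:ℝ) ≤ b := by
    intro k hk
    have : k + 1 ≤ q := Finset.mem_range.mp hk
    have : ((k:ℝ) + 1) ≤ (q:ℝ) := by exact_mod_cast this
    simp [hbdef]; linarith
  have hm1nonneg : 0 ≤ m1 := by
    rw [hm1]
    exact Finset.sum_nonneg fun k _ => mul_nonneg (hp k) (Nat.cast_nonneg k)
  have hm1b : m1 ≤ b := by
    rw [hm1]
    calc ∑ k ∈ Finset.range q, p k * (k:ℝ) ≤ ∑ k ∈ Finset.range q, p k * b :=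
          Finset.sum_le_sum fun k hk => mul_le_mul_of_nonneg_left (hkb k hk) (hp k)
      _ = b := by rw [← Finset.sum_mul, hsum1, one_mul]
  have hmgf : ProbabilityTheory.mgf (fun ω => (X ω : ℝ) - m1) μ' θ
      = ∑ k ∈ Finset.range q, p k * Real.exp (θ * ((k:ℝ) - m1)) := by
    have := fin_range_integral (μ' := μ') X hX q hr (fun k => Real.exp (θ * ((k:ℝ) - m1)))
    simpa [ProbabilityTheory.mgf] using this
  rw [hmgf]
  set S1 : ℝ := ∑ k ∈ Finset.range q, p k * (k:ℝ) with hS1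
  set S2 : ℝ := ∑ k ∈ Finset.range q, p k * (k:ℝ)^2 with hS2
  have step1 : ∑ k ∈ Finset.range q, p k * Real.exp (θ * ((k:ℝ) - m1))
      ≤ ∑ k ∈ Finset.range q, p k * (1 + θ * ((k:ℝ) - m1) + (θ * ((k:ℝ) - m1))^2) := by
    refine Finset.sum_le_sum fun k hk => mul_le_mul_of_nonneg_left ?_ (hp k)
    refine exp_le_one_add_sq ?_
    rw [abs_mul]
    calc |θ| * |(k:ℝ) - m1| ≤ |θ| * b := by
          refine mul_le_mul_of_nonneg_left ?_ (abs_nonneg θ)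
          rw [abs_le]
          constructor
          · have := Nat.cast_nonneg (α := ℝ) k; linarith
          · have := hkb k hk; linarith
      _ ≤ 1 := hθ
  have step2 : ∑ k ∈ Finset.range q, p k * (1 + θ * ((k:ℝ) - m1) + (θ * ((k:ℝ) - m1))^2)
      = 1 + θ^2 * (S2 - m1^2) := by
    have expand : ∀ k ∈ Finset.range q,
        p k * (1 + θ * ((k:ℝ) - m1) + (θ * ((k:ℝ) - m1))^2)
        = p k + θ * (p k * (k:ℝ)) - (θ * m1) * p k
          + θ^2 * (p k * (k:ℝ)^2) - (2 * θ^2 * m1) * (p k * (k:ℝ))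
          + (θ^2 * m1^2) * p k := by
      intro k _; ring
    rw [Finset.sum_congr rfl expand]
    simp only [Finset.sum_add_distrib, Finset.sum_sub_distrib, ← Finset.mul_sum]
    rw [hsum1, ← hS1, ← hS2, ← hm1]
    ring
  have hS2le : S2 ≤ b * S1 := by
    rw [hS1, hS2, Finset.mul_sum]
    refine Finset.sum_le_sum fun k hk => ?_
    have h1 : (k:ℝ)^2 ≤ b * (k:ℝ) := by
      have := hkb k hk
      have h2 := Nat.cast_nonneg (α := ℝ) k
      nlinarith
    calc p k * (k:ℝ)^2 ≤ p k * (b * (k:ℝ)) := mul_le_mul_of_nonneg_left h1 (hp k)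
      _ = b * (p k * (k:ℝ)) := by ring
  have hvar : S2 - m1^2 ≤ b^2/4 := by
    have hSm : S1 = m1 := hm1.symm
    rw [hSm] at hS2le
    nlinarith [hS2le, sq_nonneg (m1 - b/2)]
  calc ∑ k ∈ Finset.range q, p k * Real.exp (θ * ((k:ℝ) - m1))
      ≤ 1 + θ^2 * (S2 - m1^2) := step1.trans (le_of_eq step2)
    _ ≤ 1 + θ^2 * (b^2/4) := by nlinarith [sq_nonneg θ]
    _ ≤ Real.exp (θ^2 * b^2/4) := by
        have := Real.add_one_le_exp (θ^2 * b^2/4)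
        linarith

lemma chernoff' [IsProbabilityMeasure μ'] (Z : Ω' → ℝ) (hZ : Measurable Z)
    {C : ℝ} (hC : ∀ ω, |Z ω| ≤ C) (s θ : ℝ) (hθ : 0 ≤ θ) :
    μ' {ω | s ≤ Z ω} ≤ ENNReal.ofReal (Real.exp (-θ*s) * ProbabilityTheory.mgf Z μ' θ) := by
  have hint : Integrable (fun ω => Real.exp (θ * Z ω)) μ' := by
    refine integrable_of_abs_le (hZ.const_mul θ).exp (C := Real.exp (|θ| * C)) ?_
    intro ω
    rw [abs_of_pos (Real.exp_pos _)]
    refine Real.exp_le_exp.mpr ?_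
    calc θ * Z ω ≤ |θ * Z ω| := le_abs_self _
      _ = |θ| * |Z ω| := abs_mul _ _
      _ ≤ |θ| * C := mul_le_mul_of_nonneg_left (hC ω) (abs_nonneg θ)
  have h := ProbabilityTheory.measure_ge_le_exp_mul_mgf (μ := μ') (X := Z) s hθ hint
  have hne : μ' {ω | s ≤ Z ω} ≠ ⊤ := measure_ne_top _ _
  rw [← ENNReal.ofReal_toReal hne]
  exact ENNReal.ofReal_le_ofReal h

end Helpers

set_option maxHeartbeats 4000000 in
/-- In the generalized β-model with the discrete Laplace mechanism
(`λ_n = exp(-ε_n/2)`), if `ε_n ≥ c √(log n)` with `c ≥ 4`, then with probability approaching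
one as `n → ∞`, `max_{1≤i≤n} |d̄_i - E(d_i)| ≤ 2(q-1)√((n-1) log(n-1))`. -/
theorem noisy_degree_uniform_deviation
    (q : ℕ) (hq : 2 ≤ q)
    (Ω : ℕ → Type) (mΩ : ∀ n, MeasurableSpace (Ω n))
    (P : ∀ n, Measure (Ω n)) (hP : ∀ n, IsProbabilityMeasure (P n))
    (α : ℕ → ℕ → ℝ) (ε : ℕ → ℝ)
    (a : ∀ n, ℕ → ℕ → Ω n → ℕ) (e : ∀ n, ℕ → Ω n → ℤ)
    -- edge weights take values in `{0,…,q-1}`, are symmetric, with zero diagonal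
    (hrange : ∀ n i j ω, a n i j ω < q)
    (hsym : ∀ n i j, a n i j = a n j i)
    (hdiag : ∀ n i ω, a n i i ω = 0)
    (hmeasa : ∀ n i j, Measurable (a n i j))
    -- edge-weight distribution of the generalized β-model
    (hlaw : ∀ n i j, i < n → j < n → i ≠ j → ∀ k, k < q →
      P n {ω | a n i j ω = k} = ENNReal.ofReal
        (Real.exp ((k : ℝ) * (α n i + α n j)) /
          ∑ l ∈ Finset.range q, Real.exp ((l : ℝ) * (α n i + α n j))))
    -- discrete Laplace noises with `λ_n = exp(-ε_n/2)`
    (hmease : ∀ n i, Measurable (e n i))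
    (hnoise : ∀ n i, i < n → ∀ z : ℤ,
      P n {ω | e n i ω = z}
        = ENNReal.ofReal (discreteLaplacePMF (Real.exp (-(ε n) / 2)) z))
    -- the edge weights (over pairs i < j) and the noises are mutually independent
    (hindep : ∀ n, iIndepFun
      (Sum.elim
        (fun (p : {p : ℕ × ℕ // p.1 < p.2 ∧ p.2 < n}) (ω : Ω n) =>
          ((a n p.1.1 p.1.2 ω : ℤ)))
        (fun (i : {i : ℕ // i < n}) (ω : Ω n) => e n i.1 ω))
      (P n))
    -- `ε_n ≥ c √(log n)` with `c ≥ 4`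
    (c : ℝ) (hc : 4 ≤ c)
    (hε : ∀ n : ℕ, c * Real.sqrt (Real.log n) ≤ ε n) :
    Tendsto (fun n => P n {ω | ∀ i, i < n →
        |(∑ j ∈ (Finset.range n).erase i, (a n i j ω : ℝ)) + (e n i ω : ℝ)
            - ∫ ω', ∑ j ∈ (Finset.range n).erase i, (a n i j ω' : ℝ) ∂(P n)|
          ≤ 2 * ((q : ℝ) - 1) * Real.sqrt (((n : ℝ) - 1) * Real.log ((n : ℝ) - 1))})
      atTop (nhds 1) := by
  classical
  set A : ∀ n : ℕ, Set (Ω n) := fun n => {ω | ∀ i, i < n →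
        |(∑ j ∈ (Finset.range n).erase i, (a n i j ω : ℝ)) + (e n i ω : ℝ)
            - ∫ ω', ∑ j ∈ (Finset.range n).erase i, (a n i j ω' : ℝ) ∂(P n)|
          ≤ 2 * ((q : ℝ) - 1) * Real.sqrt (((n : ℝ) - 1) * Real.log ((n : ℝ) - 1))}
    with hA
  have hAmeas : ∀ n, MeasurableSet (A n) := by
    intro n
    have : A n = ⋂ (i : ℕ), {ω | i < n →
        |(∑ j ∈ (Finset.range n).erase i, (a n i j ω : ℝ)) + (e n i ω : ℝ)
            - ∫ ω', ∑ j ∈ (Finset.range n).erase i, (a n i j ω' : ℝ) ∂(P n)|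
          ≤ 2 * ((q : ℝ) - 1) * Real.sqrt (((n : ℝ) - 1) * Real.log ((n : ℝ) - 1))} := by
      ext ω; simp [hA, Set.mem_iInter]
    rw [this]
    refine MeasurableSet.iInter fun i => ?_
    by_cases hi : i < n
    · simp only [hi, forall_true_left]
      refine measurableSet_le (Measurable.abs ?_) measurable_const
      refine Measurable.sub (Measurable.add ?_ ?_) measurable_const
      · exact Finset.measurable_sum _ fun j _ => measurable_from_top.comp (hmeasa n i j)
      · exact measurable_from_top.comp (hmease n i)
    · convert MeasurableSet.univ using 1
      ext ω; simp [hi]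
  have key : ∀ n : ℕ, 326 ≤ n → P n ((A n)ᶜ)
      ≤ ENNReal.ofReal (4 * (n:ℝ) * Real.exp (-2 * Real.log ((n:ℝ) - 1))) := by
    intro n hn
    haveI := hP n
    have hn1 : 1 ≤ n := by omega
    set m : ℝ := (n:ℝ) - 1 with hmdef
    have hm325 : 325 ≤ m := by
      have : (326:ℝ) ≤ (n:ℝ) := by exact_mod_cast hn
      rw [hmdef]; linarith
    have hm0 : (0:ℝ) < m := by linarith
    obtain ⟨hL1, h9L, h18⟩ := log_facts hm325
    set L : ℝ := Real.log m with hLdef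
    have hL0 : (0:ℝ) ≤ L := by linarith
    set b : ℝ := (q:ℝ) - 1 with hbdef
    have hb1 : (1:ℝ) ≤ b := by
      have : (2:ℝ) ≤ (q:ℝ) := by exact_mod_cast hq
      rw [hbdef]; linarith
    have hb0 : (0:ℝ) < b := by linarith
    set R : ℝ := Real.sqrt (m * L) with hRdef
    have hR0 : (0:ℝ) ≤ R := Real.sqrt_nonneg _
    set s : ℝ := (3/2) * b * R with hsdef
    set u : ℝ := (1/2) * b * R with hudef
    have hu0 : 0 ≤ u := by rw [hudef]; positivity
    -- degree means
    set μj : ℕ → ℕ → ℝ := fun i j => ∫ ω', ((a n i j ω' : ℝ)) ∂(P n) with hμjdef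
    have hcast0 : ∀ i j (ω : Ω n), (0:ℝ) ≤ ((a n i j ω : ℕ):ℝ) := fun i j ω => Nat.cast_nonneg _
    have hcastb : ∀ i j (ω : Ω n), ((a n i j ω : ℕ):ℝ) ≤ b := by
      intro i j ω
      have h1 : a n i j ω + 1 ≤ q := hrange n i j ω
      have h2 : ((a n i j ω : ℕ):ℝ) + 1 ≤ (q:ℝ) := by exact_mod_cast h1
      rw [hbdef]; linarith
    have hintega : ∀ i j, Integrable (fun ω => ((a n i j ω : ℕ):ℝ)) (P n) := by
      intro i j
      refine integrable_of_abs_le (measurable_from_top.comp (hmeasa n i j)) (C := b) ?_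
      intro ω
      rw [abs_of_nonneg (hcast0 i j ω)]
      exact hcastb i j ω
    have hμj0 : ∀ i j, 0 ≤ μj i j := fun i j =>
      integral_nonneg (fun ω => hcast0 i j ω)
    have hμjb : ∀ i j, μj i j ≤ b := by
      intro i j
      calc μj i j ≤ ∫ _, b ∂(P n) :=
            integral_mono (hintega i j) (integrable_const b) (fun ω => hcastb i j ω)
        _ = b := by simp
    set Z : ℕ → Ω n → ℝ := fun i ω =>
      ∑ j ∈ (Finset.range n).erase i, (((a n i j ω : ℕ):ℝ) - μj i j) with hZdef
    have hES : ∀ i, (∫ ω', ∑ j ∈ (Finset.range n).erase i, ((a n i j ω' : ℕ):ℝ) ∂(P n))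
        = ∑ j ∈ (Finset.range n).erase i, μj i j := fun i =>
      integral_finset_sum _ (fun j _ => hintega i j)
    have hZeq : ∀ i (ω : Ω n), Z i ω
        = (∑ j ∈ (Finset.range n).erase i, ((a n i j ω:ℕ):ℝ))
          - ∑ j ∈ (Finset.range n).erase i, μj i j := by
      intro i ω
      simp only [hZdef]
      rw [Finset.sum_sub_distrib]
    set θ : ℝ := 3 * Real.sqrt (L/m) / b with hθdef
    have hθ0 : 0 ≤ θ := by
      rw [hθdef]
      positivity
    have hLm0 : (0:ℝ) ≤ L/m := by positivity
    have hsqLm : Real.sqrt (L/m) * R = L := by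
      rw [hRdef, ← Real.sqrt_mul hLm0]
      rw [show L/m*(m*L) = L^2 by field_simp]
      exact Real.sqrt_sq hL0
    have hθb : θ * b = 3 * Real.sqrt (L/m) := by
      rw [hθdef]; field_simp
    have hθb1 : θ * b ≤ 1 := by
      rw [hθb]
      have h1 : L/m ≤ 1/9 := by
        rw [div_le_div_iff₀ hm0 (by norm_num)]
        linarith
      have h2 : Real.sqrt (L/m) ≤ Real.sqrt (1/9) := Real.sqrt_le_sqrt h1
      have h3 : Real.sqrt (1/9 : ℝ) = 1/3 := by
        rw [show (1/9:ℝ) = (1/3)^2 by norm_num, Real.sqrt_sq (by norm_num : (0:ℝ) ≤ 1/3)]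
      rw [h3] at h2
      linarith
    have hθs : θ * s = 9/2 * L := by
      have h1 : θ * s = (9/2) * (Real.sqrt (L/m) * R) := by
        rw [hθdef, hsdef]
        field_simp
        ring
      rw [h1, hsqLm]
    have hMθ : m * (θ^2 * b^2 / 4) = 9/4 * L := by
      have h1 : θ^2 * b^2 = (θ*b)^2 := by ring
      rw [h1, hθb, mul_pow, Real.sq_sqrt hLm0]
      field_simp
      ring
    -- mgf bound for the centered degree sums
    have hmgfZ : ∀ i, i < n → ∀ t : ℝ, |t| * b ≤ 1 →
        mgf (Z i) (P n) t ≤ Real.exp (m * (t^2 * b^2/4)) := by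
      intro i hi t ht
      set Y : ({p : ℕ × ℕ // p.1 < p.2 ∧ p.2 < n} ⊕ {i' : ℕ // i' < n}) → Ω n → ℝ :=
        fun k =>
          (Sum.elim
            (fun (p : {p : ℕ × ℕ // p.1 < p.2 ∧ p.2 < n}) (z : ℤ) =>
              ((z:ℝ) - μj p.1.1 p.1.2))
            (fun (_ : {i' : ℕ // i' < n}) (z : ℤ) => ((z:ℝ))) k) ∘
          (Sum.elim
            (fun (p : {p : ℕ × ℕ // p.1 < p.2 ∧ p.2 < n}) (ω : Ω n) =>
              ((a n p.1.1 p.1.2 ω : ℤ)))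
            (fun (i' : {i' : ℕ // i' < n}) (ω : Ω n) => e n i'.1 ω) k) with hYdef
      have hYindep : iIndepFun Y (P n) := by
        refine (hindep n).comp _ ?_
        rintro (p | i')
        · simp only [Sum.elim_inl]
          exact (measurable_from_top (f := fun z : ℤ => ((z:ℝ)))).sub_const _
        · simp only [Sum.elim_inr]
          exact measurable_from_top
      have hYmeas : ∀ k, Measurable (Y k) := by
        rintro (p | i')
        · simp only [hYdef, Sum.elim_inl]
          exact ((measurable_from_top (f := fun z : ℤ => ((z:ℝ)))).sub_const _).comp
            (measurable_from_top.comp (hmeasa n p.1.1 p.1.2))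
        · simp only [hYdef, Sum.elim_inr]
          exact (measurable_from_top (f := fun z : ℤ => ((z:ℝ)))).comp (hmease n i'.1)
      set sI := (Finset.range n).erase i with hsI
      have hjmem : ∀ x : {x // x ∈ sI}, x.1 < n ∧ x.1 ≠ i := fun x =>
        ⟨Finset.mem_range.mp (Finset.mem_of_mem_erase x.2), Finset.ne_of_mem_erase x.2⟩
      set ψ : {x // x ∈ sI} → ({p : ℕ × ℕ // p.1 < p.2 ∧ p.2 < n} ⊕ {i' : ℕ // i' < n}) :=
        fun x => if h : i < x.1
          then Sum.inl ⟨(i, x.1), ⟨h, (hjmem x).1⟩⟩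
          else Sum.inl ⟨(x.1, i), ⟨lt_of_le_of_ne (not_lt.mp h) (hjmem x).2, hi⟩⟩ with hψ
      have hψinj : Function.Injective ψ := by
        intro x y hxy
        simp only [hψ] at hxy
        apply Subtype.ext
        split_ifs at hxy with h1 h2 h2 <;>
          simp only [Sum.inl.injEq, Subtype.mk.injEq, Prod.mk.injEq] at hxy
        · exact hxy.2
        · exact absurd hxy.1.symm (hjmem y).2
        · exact absurd hxy.1 (hjmem x).2
        · exact hxy.1
      set T := Finset.image ψ sI.attach with hT
      have hZsum : Z i = ∑ k ∈ T, Y k := by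
        funext ω
        rw [Finset.sum_apply]
        rw [hT, Finset.sum_image (fun x _ y _ h => hψinj h)]
        have h0 : Z i ω = ∑ x ∈ sI.attach, (((a n i x.1 ω : ℕ):ℝ) - μj i x.1) := by
          simp only [hZdef]
          rw [← Finset.sum_attach sI (fun j => (((a n i j ω : ℕ):ℝ) - μj i j))]
        rw [h0]
        refine Finset.sum_congr rfl fun x _ => ?_
        simp only [hψ]
        by_cases h : i < x.1
        · rw [dif_pos h]
          simp only [hYdef, Sum.elim_inl, Function.comp_apply]
          push_cast
          ring
        · rw [dif_neg h]
          simp only [hYdef, Sum.elim_inl, Function.comp_apply, hμjdef]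
          rw [← hsym n i x.1]
          push_cast
          ring
      have hcardT : (T.card : ℝ) = m := by
        rw [hT, Finset.card_image_of_injective _ hψinj, Finset.card_attach, hsI,
            Finset.card_erase_of_mem (Finset.mem_range.mpr hi), Finset.card_range,
            hmdef]
        rw [Nat.cast_sub hn1]
        norm_num
      have hfac : ∀ k ∈ T, mgf (Y k) (P n) t ≤ Real.exp (t^2 * b^2/4) := by
        have claim : ∀ (p : {p : ℕ × ℕ // p.1 < p.2 ∧ p.2 < n}),
            mgf (Y (Sum.inl p)) (P n) t ≤ Real.exp (t^2 * b^2/4) := by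
          intro p
          have hYp : Y (Sum.inl p) = fun ω => ((a n p.1.1 p.1.2 ω : ℕ):ℝ)
              - ∫ ω', ((a n p.1.1 p.1.2 ω' : ℕ):ℝ) ∂(P n) := by
            funext ω
            simp only [hYdef, Sum.elim_inl, Function.comp_apply, hμjdef]
            push_cast
            ring
          rw [hYp]
          exact mgf_bound_discrete (μ' := P n) (a n p.1.1 p.1.2) (hmeasa n p.1.1 p.1.2)
            q (by omega) (hrange n p.1.1 p.1.2) t ht
        intro k hk
        rw [hT, Finset.mem_image] at hk
        obtain ⟨x, _, rfl⟩ := hk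
        simp only [hψ]
        by_cases h : i < x.1
        · rw [dif_pos h]; exact claim _
        · rw [dif_neg h]; exact claim _
      rw [hZsum, iIndepFun.mgf_sum hYindep hYmeas T]
      calc ∏ k ∈ T, mgf (Y k) (P n) t ≤ ∏ _k ∈ T, Real.exp (t^2*b^2/4) :=
            Finset.prod_le_prod (fun k _ => mgf_nonneg) hfac
        _ = Real.exp (t^2*b^2/4) ^ T.card := Finset.prod_const _
        _ = Real.exp ((T.card:ℝ) * (t^2*b^2/4)) := by rw [← Real.exp_nat_mul]
        _ = Real.exp (m * (t^2*b^2/4)) := by rw [hcardT]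
    have hB12 : ∀ i, i < n →
        P n {ω | s ≤ Z i ω} ≤ ENNReal.ofReal (Real.exp (-2*L)) ∧
        P n {ω | s ≤ -(Z i ω)} ≤ ENNReal.ofReal (Real.exp (-2*L)) := by
      intro i hi
      have hZmeas : Measurable (Z i) := by
        simp only [hZdef]
        exact Finset.measurable_sum _ fun j _ =>
          (measurable_from_top.comp (hmeasa n i j)).sub_const _
      have hZbd : ∀ ω, |Z i ω| ≤ (n:ℝ) * (2*b) := by
        intro ω
        have h1 : |Z i ω| ≤ ∑ j ∈ (Finset.range n).erase i, |((a n i j ω:ℕ):ℝ) - μj i j| := by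
          simp only [hZdef]
          exact Finset.abs_sum_le_sum_abs _ _
        have h2 : ∑ j ∈ (Finset.range n).erase i, |((a n i j ω:ℕ):ℝ) - μj i j|
            ≤ ∑ _j ∈ (Finset.range n).erase i, (2*b) := by
          refine Finset.sum_le_sum fun j _ => ?_
          have c1 := hcastb i j ω
          have c2 := hcast0 i j ω
          have c3 := hμj0 i j
          have c4 := hμjb i j
          rw [abs_le]
          constructor <;> linarith
        have h3 : (∑ _j ∈ (Finset.range n).erase i, (2*b : ℝ))
            = (((Finset.range n).erase i).card : ℝ) * (2*b) := by
          rw [Finset.sum_const, nsmul_eq_mul]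
        have h4 : (((Finset.range n).erase i).card : ℝ) ≤ (n:ℝ) := by
          have := (Finset.card_le_card (Finset.erase_subset i (Finset.range n))).trans_eq
            (Finset.card_range n)
          exact_mod_cast this
        have h5 : (((Finset.range n).erase i).card : ℝ) * (2*b) ≤ (n:ℝ) * (2*b) := by
          apply mul_le_mul_of_nonneg_right h4 (by positivity)
        linarith
      have hexpo : -(θ*s) + m*(θ^2*b^2/4) ≤ -2*L := by
        rw [hθs, hMθ]
        linarith
      constructor
      · have hch := chernoff' (μ' := P n) (Z i) hZmeas hZbd s θ hθ0
        refine hch.trans (ENNReal.ofReal_le_ofReal ?_)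
        have hm1 := hmgfZ i hi θ (by rwa [abs_of_nonneg hθ0])
        calc Real.exp (-θ*s) * mgf (Z i) (P n) θ
            ≤ Real.exp (-θ*s) * Real.exp (m * (θ^2*b^2/4)) :=
              mul_le_mul_of_nonneg_left hm1 (Real.exp_pos _).le
          _ = Real.exp (-θ*s + m*(θ^2*b^2/4)) := (Real.exp_add _ _).symm
          _ ≤ Real.exp (-2*L) := Real.exp_le_exp.mpr (by rw [neg_mul]; exact hexpo)
      · have hch := chernoff' (μ' := P n) (-(Z i)) hZmeas.neg
          (C := (n:ℝ)*(2*b)) (fun ω => by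
            simp only [Pi.neg_apply, abs_neg]
            exact hZbd ω) s θ hθ0
        have hev : {ω | s ≤ (-(Z i)) ω} = {ω | s ≤ -(Z i ω)} := rfl
        rw [hev] at hch
        refine hch.trans (ENNReal.ofReal_le_ofReal ?_)
        rw [mgf_neg]
        have hm1 := hmgfZ i hi (-θ) (by rwa [abs_neg, abs_of_nonneg hθ0])
        rw [neg_sq] at hm1
        calc Real.exp (-θ*s) * mgf (Z i) (P n) (-θ)
            ≤ Real.exp (-θ*s) * Real.exp (m * (θ^2*b^2/4)) :=
              mul_le_mul_of_nonneg_left hm1 (Real.exp_pos _).le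
          _ = Real.exp (-θ*s + m*(θ^2*b^2/4)) := (Real.exp_add _ _).symm
          _ ≤ Real.exp (-2*L) := Real.exp_le_exp.mpr (by rw [neg_mul]; exact hexpo)
    have hB3 : ∀ i, i < n →
        P n {ω | u < |((e n i ω : ℤ):ℝ)|} ≤ ENNReal.ofReal (2 * Real.exp (-2*L)) := by
      intro i hi
      set lam : ℝ := Real.exp (-(ε n)/2) with hlam
      have hlogn0 : (0:ℝ) < Real.log n := by
        apply Real.log_pos
        have : (326:ℝ) ≤ (n:ℝ) := by exact_mod_cast hn
        linarith
      have hsqlogn : 0 < Real.sqrt (Real.log n) := Real.sqrt_pos.mpr hlogn0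
      have hε4 : 4 * Real.sqrt (Real.log n) ≤ ε n := by
        have h1 : 4 * Real.sqrt (Real.log n) ≤ c * Real.sqrt (Real.log n) := by nlinarith
        linarith [hε n]
      have hεpos : 0 < ε n := by nlinarith
      have hlam0 : 0 < lam := Real.exp_pos _
      have hlam1 : lam < 1 := by
        rw [hlam, ← Real.exp_zero]
        exact Real.exp_lt_exp.mpr (by linarith)
      have htail := noise_tail (ν := P n) (e n i) (hmease n i) hlam0 hlam1
        (fun z => hnoise n i hi z) u hu0
      refine htail.trans (ENNReal.ofReal_le_ofReal ?_)
      set K := Nat.floor u with hK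
      have hKu : u ≤ (K:ℝ) + 1 := (Nat.lt_floor_add_one u).le
      have hpow : lam ^ (K+1) = Real.exp ((((K:ℕ):ℝ)+1) * (-(ε n)/2)) := by
        rw [hlam, ← Real.exp_nat_mul]
        congr 1
        push_cast
        ring
      rw [hpow]
      have hlogmn : L ≤ Real.log n := by
        rw [hLdef]
        apply Real.log_le_log hm0
        rw [hmdef]; linarith
      have hsqL : Real.sqrt L ≤ Real.sqrt (Real.log n) := Real.sqrt_le_sqrt hlogmn
      have hsqL0 : 0 ≤ Real.sqrt L := Real.sqrt_nonneg _
      have hRL : Real.sqrt L * R = Real.sqrt m * L := by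
        rw [hRdef, ← Real.sqrt_mul hL0, show L * (m*L) = m * L^2 by ring,
            Real.sqrt_mul hm0.le, Real.sqrt_sq hL0]
      have hchain : 2 * L ≤ (((K:ℕ):ℝ)+1) * (ε n / 2) := by
        calc 2*L ≤ Real.sqrt L * R := by rw [hRL]; nlinarith
          _ ≤ b * (Real.sqrt L * R) := le_mul_of_one_le_left (by positivity) hb1
          _ = u * (2*Real.sqrt L) := by rw [hudef]; ring
          _ ≤ u * (2*Real.sqrt (Real.log n)) := by
              apply mul_le_mul_of_nonneg_left (by linarith) hu0
          _ ≤ u * (ε n / 2) := by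
              apply mul_le_mul_of_nonneg_left (by linarith) hu0
          _ ≤ (((K:ℕ):ℝ)+1) * (ε n / 2) :=
              mul_le_mul_of_nonneg_right hKu (by linarith)
      have hexp : ((((K:ℕ):ℝ)+1) * (-(ε n)/2)) ≤ -2*L := by nlinarith
      have := Real.exp_le_exp.mpr hexp
      nlinarith [Real.exp_pos ((((K:ℕ):ℝ)+1) * (-(ε n)/2))]
    have hsub : (A n)ᶜ ⊆ ⋃ i ∈ Finset.range n,
        ({ω | s ≤ Z i ω} ∪ {ω | s ≤ -(Z i ω)} ∪ {ω | u < |((e n i ω : ℤ):ℝ)|}) := by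
      intro ω hω
      simp only [hA, Set.mem_compl_iff, Set.mem_setOf_eq] at hω
      push_neg at hω
      obtain ⟨i, hi, hgt⟩ := hω
      rw [Set.mem_iUnion₂]
      refine ⟨i, Finset.mem_range.mpr hi, ?_⟩
      by_contra hnot
      simp only [Set.mem_union, Set.mem_setOf_eq, not_or, not_le, not_lt] at hnot
      obtain ⟨⟨h1, h2⟩, h3⟩ := hnot
      have hrw : (∑ j ∈ (Finset.range n).erase i, ((a n i j ω:ℕ):ℝ)) + ((e n i ω:ℤ):ℝ)
          - (∫ ω', ∑ j ∈ (Finset.range n).erase i, ((a n i j ω' : ℕ):ℝ) ∂(P n))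
          = Z i ω + ((e n i ω:ℤ):ℝ) := by
        rw [hES i, hZeq]; ring
      rw [hrw] at hgt
      have htri : |Z i ω + ((e n i ω:ℤ):ℝ)| ≤ |Z i ω| + |((e n i ω:ℤ):ℝ)| := abs_add_le _ _
      have habsZ : |Z i ω| < s := abs_lt.mpr ⟨by linarith, h1⟩
      have hts : 2 * ((q:ℝ) - 1) * Real.sqrt (((n:ℝ) - 1) * Real.log ((n:ℝ) - 1))
          = s + u := by
        rw [hsdef, hudef, hbdef, hRdef, hLdef, hmdef]; ring
      rw [hts] at hgt
      linarith
    calc P n ((A n)ᶜ)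
        ≤ ∑ i ∈ Finset.range n, P n
            ({ω | s ≤ Z i ω} ∪ {ω | s ≤ -(Z i ω)} ∪ {ω | u < |((e n i ω : ℤ):ℝ)|}) :=
          (measure_mono hsub).trans (measure_biUnion_finset_le _ _)
      _ ≤ ∑ _i ∈ Finset.range n, ENNReal.ofReal (4 * Real.exp (-2*L)) := by
          refine Finset.sum_le_sum fun i hi => ?_
          obtain ⟨hb1', hb2'⟩ := hB12 i (Finset.mem_range.mp hi)
          have hb3' := hB3 i (Finset.mem_range.mp hi)
          calc P n ({ω | s ≤ Z i ω} ∪ {ω | s ≤ -(Z i ω)} ∪ {ω | u < |((e n i ω : ℤ):ℝ)|})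
              ≤ P n ({ω | s ≤ Z i ω} ∪ {ω | s ≤ -(Z i ω)})
                + P n {ω | u < |((e n i ω : ℤ):ℝ)|} := measure_union_le _ _
            _ ≤ (P n {ω | s ≤ Z i ω} + P n {ω | s ≤ -(Z i ω)})
                + P n {ω | u < |((e n i ω : ℤ):ℝ)|} :=
                add_le_add_left (measure_union_le _ _) _
            _ ≤ (ENNReal.ofReal (Real.exp (-2*L)) + ENNReal.ofReal (Real.exp (-2*L)))
                + ENNReal.ofReal (2 * Real.exp (-2*L)) :=
                add_le_add (add_le_add hb1' hb2') hb3'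
            _ = ENNReal.ofReal (4 * Real.exp (-2*L)) := by
                rw [← ENNReal.ofReal_add (Real.exp_pos _).le (Real.exp_pos _).le,
                    ← ENNReal.ofReal_add (by positivity) (by positivity)]
                congr 1
                ring
      _ = ENNReal.ofReal (4 * (n:ℝ) * Real.exp (-2 * Real.log ((n:ℝ) - 1))) := by
          rw [Finset.sum_const, Finset.card_range, nsmul_eq_mul,
              ← ENNReal.ofReal_natCast n,
              ← ENNReal.ofReal_mul (Nat.cast_nonneg n)]
          congr 1
          rw [hLdef, hmdef]
          ring
  -- the deviation bound tends to zero
  have hδ0 : ∀ n : ℕ, 0 ≤ 4 * (n:ℝ) * Real.exp (-2 * Real.log ((n:ℝ) - 1)) := by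
    intro n; positivity
  have hδ : Tendsto (fun n : ℕ => 4 * (n:ℝ) * Real.exp (-2 * Real.log ((n:ℝ) - 1)))
      atTop (nhds 0) := by
    have hle : ∀ n : ℕ, 2 ≤ n →
        4 * (n:ℝ) * Real.exp (-2 * Real.log ((n:ℝ) - 1)) ≤ 16 / (n:ℝ) := by
      intro n hn
      have hn2 : (2:ℝ) ≤ (n:ℝ) := by exact_mod_cast hn
      have hm0 : (0:ℝ) < (n:ℝ) - 1 := by linarith
      have hexp : Real.exp (-2 * Real.log ((n:ℝ) - 1))
          = 1 / (((n:ℝ) - 1) * ((n:ℝ) - 1)) := by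
        rw [show (-2 : ℝ) * Real.log ((n:ℝ) - 1)
            = -(Real.log ((n:ℝ)-1) + Real.log ((n:ℝ)-1)) by ring]
        rw [Real.exp_neg, Real.exp_add, Real.exp_log hm0]
        rw [one_div]
      rw [hexp, mul_one_div, div_le_div_iff₀ (by positivity) (by positivity)]
      nlinarith
    refine tendsto_of_tendsto_of_tendsto_of_le_of_le'
      (tendsto_const_nhds) (tendsto_const_div_atTop_nhds_zero_nat 16) ?_ ?_
    · exact Filter.Eventually.of_forall hδ0
    · filter_upwards [Filter.eventually_ge_atTop 2] with n hn using hle n hn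
  have htoReal : Tendsto (fun n => (P n (A n)).toReal) atTop (nhds 1) := by
    refine tendsto_of_tendsto_of_tendsto_of_le_of_le'
      (g := fun n : ℕ => 1 - (4 * (n:ℝ) * Real.exp (-2 * Real.log ((n:ℝ) - 1))))
      (h := fun _ : ℕ => (1:ℝ)) ?_ ?_ ?_ ?_
    · simpa using (tendsto_const_nhds (x := (1:ℝ)) (f := atTop)).sub hδ
    · exact tendsto_const_nhds
    · filter_upwards [Filter.eventually_ge_atTop 326] with n hn
      haveI := hP n
      have hsum := prob_compl_eq_one_sub (μ := P n) (hAmeas n)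
      have h1 : (P n ((A n)ᶜ)).toReal
          ≤ 4 * (n:ℝ) * Real.exp (-2 * Real.log ((n:ℝ) - 1)) := by
        have := key n hn
        calc (P n ((A n)ᶜ)).toReal
            ≤ (ENNReal.ofReal (4 * (n:ℝ) * Real.exp (-2 * Real.log ((n:ℝ) - 1)))).toReal :=
              ENNReal.toReal_mono ENNReal.ofReal_ne_top this
          _ = _ := ENNReal.toReal_ofReal (hδ0 n)
      have h2 : (P n (A n)).toReal = 1 - (P n ((A n)ᶜ)).toReal := by
        have hadd := measure_add_measure_compl (μ := P n) (hAmeas n)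
        have : (P n (A n)).toReal + (P n ((A n)ᶜ)).toReal = 1 := by
          rw [← ENNReal.toReal_add (measure_ne_top _ _) (measure_ne_top _ _), hadd]
          simp
        linarith
      rw [h2]; linarith
    · refine Filter.Eventually.of_forall fun n => ?_
      haveI := hP n
      exact ENNReal.toReal_le_of_le_ofReal one_pos.le (by simpa using prob_le_one)
  have heq : (fun n => P n (A n)) = fun n => ENNReal.ofReal ((P n (A n)).toReal) := by
    funext n
    exact (ENNReal.ofReal_toReal (measure_ne_top _ _)).symm
  rw [heq]
  have h2 := (ENNReal.continuous_ofReal.tendsto 1).comp htoReal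
  rw [ENNReal.ofReal_one] at h2
  exact h2
end

section
/- Let e_1,…,e_n be i.i.d. discrete Laplace random variables with parameter λ_n = exp(−ε_n/2), and let κ_n = 2(q−1)√((n−1) log(n−1)) with q ≥ 2 fixed. If ε_n·⌊κ_n/2⌋ ≥ 4 log n, then P(max_{1≤i≤n} |e_i| ≥ κ_n/2) ≤ 2/n. -/
open MeasureTheory ProbabilityTheory

/-- For i.i.d. discrete Laplace noises with parameter `λ_n = exp(-ε_n/2)` and
`κ_n = 2(q-1)√((n-1)log(n-1))`, if `ε_n ⌊κ_n/2⌋ ≥ 4 log n` then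
`P(max_i |e_i| ≥ κ_n/2) ≤ 2/n`. -/
theorem discrete_laplace_max_tail_bound
    {Ω : Type*} [MeasurableSpace Ω] (P : Measure Ω) [IsProbabilityMeasure P]
    (n q : ℕ) (hn : 0 < n) (hq : 2 ≤ q)
    (ε : ℝ)
    (e : Fin n → Ω → ℤ) (hmeas : ∀ i, Measurable (e i))
    (hpmf : ∀ i (z : ℤ),
      P {ω | e i ω = z} = ENNReal.ofReal (discreteLaplacePMF (Real.exp (-ε / 2)) z))
    (hindep : iIndepFun e P)
    (kap : ℝ)
    (hkap : kap = 2 * ((q : ℝ) - 1) * Real.sqrt (((n : ℝ) - 1) * Real.log ((n : ℝ) - 1)))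
    (hcond : 4 * Real.log n ≤ ε * (⌊kap / 2⌋₊ : ℝ)) :
    P {ω | kap / 2 ≤ Finset.univ.sup' ⟨⟨0, hn⟩, Finset.mem_univ _⟩
          (fun i => |(e i ω : ℝ)|)}
      ≤ ENNReal.ofReal (2 / n) := by
  rcases eq_or_lt_of_le (show 1 ≤ n from hn) with h1 | hn2
  · -- n = 1 : trivial since 2/n = 2 and P ≤ 1
    have hn1 : n = 1 := h1.symm
    subst hn1
    have : (2:ℝ)/(1:ℕ) = 2 := by norm_num
    calc P _ ≤ 1 := prob_le_one
    _ ≤ ENNReal.ofReal (2 / (1:ℕ)) := by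
        rw [this]
        simp [ENNReal.one_le_ofReal]
  · -- n ≥ 2
    set lam := Real.exp (-ε / 2) with hlam
    set m := ⌊kap / 2⌋₊ with hm
    have hnR : (2:ℝ) ≤ (n:ℝ) := by exact_mod_cast hn2
    have hlogn : 0 < Real.log n := Real.log_pos (by linarith)
    have hεm : 0 < ε * m := lt_of_lt_of_le (by linarith) hcond
    have hε : 0 < ε := by
      by_contra h
      push_neg at h
      have : ε * (m:ℝ) ≤ 0 := mul_nonpos_iff.2 (Or.inr ⟨h, Nat.cast_nonneg m⟩)
      linarith
    have hlam0 : 0 < lam := Real.exp_pos _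
    have hlam1 : lam < 1 := by
      rw [hlam]
      apply Real.exp_lt_one_iff.2
      linarith
    have hc0 : 0 ≤ (1 - lam) / (1 + lam) := div_nonneg (by linarith) (by linarith)
    -- lam ^ m ≤ 1 / n ^ 2
    have hlamm : lam ^ m ≤ 1 / (n:ℝ) ^ 2 := by
      have h1 : lam ^ m = Real.exp ((m:ℝ) * (-ε / 2)) := by
        rw [hlam, ← Real.exp_nat_mul]
      have h2 : Real.exp ((m:ℝ) * (-ε / 2)) ≤ Real.exp (-(2 * Real.log n)) := by
        apply Real.exp_le_exp.2
        nlinarith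
      have h3 : Real.exp (-(2 * Real.log n)) = 1 / (n:ℝ) ^ 2 := by
        rw [Real.exp_neg]
        have : (2:ℝ) * Real.log n = Real.log ((n:ℝ) ^ 2) := by
          rw [Real.log_pow]; push_cast; ring
        have hn0 : (0:ℝ) < (n:ℝ) := by linarith
        rw [this, Real.exp_log (by positivity)]
        rw [one_div]
      rw [h1]
      rw [← h3]
      exact h2
    have hkap0 : 0 ≤ kap := by
      rw [hkap]
      have : (1:ℝ) ≤ (q:ℝ) - 1 := by
        have : (2:ℝ) ≤ (q:ℝ) := by exact_mod_cast hq
        linarith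
      positivity
    -- the covering
    have hsub : {ω | kap / 2 ≤ Finset.univ.sup' ⟨⟨0, hn⟩, Finset.mem_univ _⟩
          (fun i => |(e i ω : ℝ)|)} ⊆
        ⋃ (i : Fin n), ⋃ (k : ℕ),
          ({ω | e i ω = ((m + k : ℕ) : ℤ)} ∪ {ω | e i ω = -((m + k : ℕ) : ℤ)}) := by
      intro ω hω
      simp only [Set.mem_setOf_eq] at hω
      obtain ⟨i, _, hi⟩ := (Finset.le_sup'_iff _).1 hω
      have h1 : (m:ℝ) ≤ |(e i ω : ℝ)| :=
        le_trans (le_trans (Nat.floor_le (by linarith)) (le_refl _)) hi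
      have h2 : (m:ℝ) ≤ ((e i ω).natAbs : ℝ) := by
        rw [Nat.cast_natAbs]
        push_cast
        exact h1
      have h3 : m ≤ (e i ω).natAbs := by exact_mod_cast h2
      refine Set.mem_iUnion.2 ⟨i, Set.mem_iUnion.2 ⟨(e i ω).natAbs - m, ?_⟩⟩
      have hmk : ((m + ((e i ω).natAbs - m) : ℕ) : ℤ) = ((e i ω).natAbs : ℤ) := by
        rw [Nat.add_sub_cancel' h3]
      rcases Int.natAbs_eq (e i ω) with h | h
      · left; simp only [Set.mem_setOf_eq, hmk]; exact h
      · right; simp only [Set.mem_setOf_eq, hmk]; exact h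
    -- per-index bound
    have hinner : ∀ i : Fin n,
        P (⋃ (k : ℕ),
          ({ω | e i ω = ((m + k : ℕ) : ℤ)} ∪ {ω | e i ω = -((m + k : ℕ) : ℤ)}))
        ≤ ENNReal.ofReal (2 / (n:ℝ) ^ 2) := by
      intro i
      have step1 : P (⋃ (k : ℕ),
          ({ω | e i ω = ((m + k : ℕ) : ℤ)} ∪ {ω | e i ω = -((m + k : ℕ) : ℤ)}))
          ≤ ∑' (k : ℕ), ENNReal.ofReal (2 * ((1 - lam) / (1 + lam) * lam ^ (m + k))) := by
        refine le_trans (measure_iUnion_le _) (ENNReal.tsum_le_tsum fun k => ?_)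
        refine le_trans (measure_union_le _ _) ?_
        rw [hpmf i, hpmf i]
        have hna : (((m + k : ℕ) : ℤ)).natAbs = m + k := Int.natAbs_natCast _
        have e1 : discreteLaplacePMF lam (((m + k : ℕ) : ℤ)) =
            (1 - lam) / (1 + lam) * lam ^ (m + k) := by
          simp only [discreteLaplacePMF]
          rw [hna]
        have e2 : discreteLaplacePMF lam (-((m + k : ℕ) : ℤ)) =
            (1 - lam) / (1 + lam) * lam ^ (m + k) := by
          simp only [discreteLaplacePMF, Int.natAbs_neg]
          rw [hna]
        rw [e1, e2, ← ENNReal.ofReal_add (by positivity) (by positivity)]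
        exact ENNReal.ofReal_le_ofReal (le_of_eq (by ring))
      have hsummable : Summable (fun k : ℕ =>
          2 * ((1 - lam) / (1 + lam) * lam ^ (m + k))) := by
        have : (fun k : ℕ => 2 * ((1 - lam) / (1 + lam) * lam ^ (m + k)))
            = fun k : ℕ => (2 * ((1 - lam) / (1 + lam)) * lam ^ m) * lam ^ k := by
          funext k; rw [pow_add]; ring
        rw [this]
        exact (summable_geometric_of_lt_one hlam0.le hlam1).mul_left _
      have step2 : (∑' (k : ℕ), ENNReal.ofReal
            (2 * ((1 - lam) / (1 + lam) * lam ^ (m + k))))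
          = ENNReal.ofReal (∑' (k : ℕ), 2 * ((1 - lam) / (1 + lam) * lam ^ (m + k))) := by
        rw [ENNReal.ofReal_tsum_of_nonneg (fun k => by positivity) hsummable]
      have step3 : (∑' (k : ℕ), 2 * ((1 - lam) / (1 + lam) * lam ^ (m + k)))
          ≤ 2 / (n:ℝ) ^ 2 := by
        have heq : (∑' (k : ℕ), 2 * ((1 - lam) / (1 + lam) * lam ^ (m + k)))
            = (2 * ((1 - lam) / (1 + lam)) * lam ^ m) * (1 - lam)⁻¹ := by
          have : (fun k : ℕ => 2 * ((1 - lam) / (1 + lam) * lam ^ (m + k)))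
              = fun k : ℕ => (2 * ((1 - lam) / (1 + lam)) * lam ^ m) * lam ^ k := by
            funext k; rw [pow_add]; ring
          rw [this, tsum_mul_left, tsum_geometric_of_lt_one hlam0.le hlam1]
        rw [heq]
        have h1lam : 0 < 1 - lam := by linarith
        have h1lam' : 0 < 1 + lam := by linarith
        have key : 2 * ((1 - lam) / (1 + lam)) * lam ^ m * (1 - lam)⁻¹
            = 2 * lam ^ m / (1 + lam) := by
          field_simp
        rw [key]
        have hb : 2 * lam ^ m / (1 + lam) ≤ 2 * lam ^ m := by
          apply div_le_self (by positivity)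
          linarith
        have hb2 : 2 * lam ^ m ≤ 2 / (n:ℝ) ^ 2 := by
          rw [div_eq_mul_inv, ← one_div]
          nlinarith [pow_nonneg hlam0.le m]
        linarith
      calc P _ ≤ _ := step1
      _ = _ := step2
      _ ≤ ENNReal.ofReal (2 / (n:ℝ) ^ 2) := ENNReal.ofReal_le_ofReal step3
    calc P {ω | kap / 2 ≤ Finset.univ.sup' ⟨⟨0, hn⟩, Finset.mem_univ _⟩
          (fun i => |(e i ω : ℝ)|)}
        ≤ P (⋃ (i : Fin n), ⋃ (k : ℕ),
          ({ω | e i ω = ((m + k : ℕ) : ℤ)} ∪ {ω | e i ω = -((m + k : ℕ) : ℤ)})) :=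
          measure_mono hsub
    _ ≤ ∑' (i : Fin n), P (⋃ (k : ℕ),
          ({ω | e i ω = ((m + k : ℕ) : ℤ)} ∪ {ω | e i ω = -((m + k : ℕ) : ℤ)})) :=
          measure_iUnion_le _
    _ ≤ ∑' (i : Fin n), ENNReal.ofReal (2 / (n:ℝ) ^ 2) :=
          ENNReal.tsum_le_tsum fun i => hinner i
    _ = (n : ENNReal) * ENNReal.ofReal (2 / (n:ℝ) ^ 2) := by
          rw [tsum_fintype]
          simp [Finset.sum_const, Finset.card_univ, nsmul_eq_mul]
    _ ≤ ENNReal.ofReal (2 / n) := by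
          have hn0 : (0:ℝ) < (n:ℝ) := by linarith
          rw [← ENNReal.ofReal_natCast n, ← ENNReal.ofReal_mul (by positivity)]
          apply ENNReal.ofReal_le_ofReal
          have heq : (n:ℝ) * (2 / (n:ℝ) ^ 2) = 2 / (n:ℝ) := by
            field_simp
          rw [heq]
end

section
/- (Skew discrete Laplace mechanism) Let λ, μ ∈ (0,1), let Z_1,…,Z_k be i.i.d. skew discrete Laplace random variables with parameters (λ, μ), and let Δ > 0. Then for any a, b ∈ ℤ^k with ‖a − b‖_1 ≤ Δ and any s ∈ ℤ^k, ∏_{i=1}^k P(Z_i = s_i − a_i) ≤ e^{ε} ∏_{i=1}^k P(Z_i = s_i − b_i), where ε = −Δ log(min(λ, μ)). Consequently, for f : 𝒢 → ℤ^k with global sensitivity Δ_G(f), the mechanism outputting f(G) + (Z_1,…,Z_k) is ε-edge differentially private with ε = −Δ_G(f) log(λ ∧ μ). -/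
open MeasureTheory ProbabilityTheory

/-- Probability mass function of the skew discrete Laplace distribution with parameters
`lam, mu ∈ (0,1)`: `P(Z = z) = C(lam,mu) lam^z` for `z ≥ 0` and `P(Z = z) = C(lam,mu) mu^{|z|}`
for `z ≤ 0`, where `C(lam,mu) = (1-lam)(1-mu)/(1-lam*mu)`. -/
noncomputable def skewDiscreteLaplacePMF (lam mu : ℝ) (z : ℤ) : ℝ :=
  (1 - lam) * (1 - mu) / (1 - lam * mu) *
    (if 0 ≤ z then lam ^ z.toNat else mu ^ (-z).toNat)

namespace SDLaux

noncomputable def gfun (lam mu : ℝ) (z : ℤ) : ℝ :=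
  if 0 ≤ z then lam ^ z.toNat else mu ^ (-z).toNat

variable {lam mu : ℝ}

lemma gfun_pos (hlam : lam ∈ Set.Ioo (0:ℝ) 1) (hmu : mu ∈ Set.Ioo (0:ℝ) 1) (z : ℤ) :
    0 < gfun lam mu z := by
  unfold gfun; split <;> [exact pow_pos hlam.1 _; exact pow_pos hmu.1 _]

lemma C_pos (hlam : lam ∈ Set.Ioo (0:ℝ) 1) (hmu : mu ∈ Set.Ioo (0:ℝ) 1) :
    0 < (1 - lam) * (1 - mu) / (1 - lam * mu) := by
  obtain ⟨h1, h2⟩ := hlam; obtain ⟨h3, h4⟩ := hmu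
  have : lam * mu < 1 := by nlinarith
  apply div_pos (by nlinarith) (by linarith)

lemma pmf_pos (hlam : lam ∈ Set.Ioo (0:ℝ) 1) (hmu : mu ∈ Set.Ioo (0:ℝ) 1) (z : ℤ) :
    0 < skewDiscreteLaplacePMF lam mu z :=
  mul_pos (C_pos hlam hmu) (gfun_pos hlam hmu z)

lemma step_up (hlam : lam ∈ Set.Ioo (0:ℝ) 1) (hmu : mu ∈ Set.Ioo (0:ℝ) 1) (z : ℤ) :
    min lam mu * gfun lam mu z ≤ gfun lam mu (z + 1) := by
  have hml : min lam mu ≤ lam := min_le_left _ _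
  have hmm : min lam mu ≤ mu := min_le_right _ _
  have hm0 : 0 < min lam mu := lt_min hlam.1 hmu.1
  have hm1 : min lam mu < 1 := min_lt_iff.mpr (Or.inl hlam.2)
  unfold gfun
  rcases lt_trichotomy z (-1) with hz | hz | hz
  · rw [if_neg (by omega), if_neg (by omega)]
    have h1 : (-z).toNat = (-(z+1)).toNat + 1 := by omega
    rw [h1, pow_succ]
    have hX := pow_nonneg hmu.1.le (-(z+1)).toNat
    have h2 : min lam mu * mu ≤ 1 := by nlinarith [hmu.2]
    calc min lam mu * (mu ^ (-(z+1)).toNat * mu)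
        = (min lam mu * mu) * mu ^ (-(z+1)).toNat := by ring
      _ ≤ 1 * mu ^ (-(z+1)).toNat := mul_le_mul_of_nonneg_right h2 hX
      _ = mu ^ (-(z+1)).toNat := one_mul _
  · subst hz
    norm_num
    nlinarith [hmu.2]
  · rw [if_pos (by omega), if_pos (by omega)]
    have h1 : (z + 1).toNat = z.toNat + 1 := by omega
    rw [h1, pow_succ]
    have := pow_nonneg hlam.1.le z.toNat
    nlinarith

lemma step_down (hlam : lam ∈ Set.Ioo (0:ℝ) 1) (hmu : mu ∈ Set.Ioo (0:ℝ) 1) (z : ℤ) :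
    min lam mu * gfun lam mu z ≤ gfun lam mu (z - 1) := by
  have hml : min lam mu ≤ lam := min_le_left _ _
  have hmm : min lam mu ≤ mu := min_le_right _ _
  have hm0 : 0 < min lam mu := lt_min hlam.1 hmu.1
  have hm1 : min lam mu < 1 := min_lt_iff.mpr (Or.inl hlam.2)
  unfold gfun
  rcases lt_trichotomy z 0 with hz | hz | hz
  · rw [if_neg (by omega), if_neg (by omega)]
    have h1 : (-(z-1)).toNat = (-z).toNat + 1 := by omega
    rw [h1, pow_succ]
    have := pow_pos hmu.1 (-z).toNat
    nlinarith [hmu.2]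
  · subst hz
    norm_num
  · rw [if_pos (by omega), if_pos (by omega)]
    have h1 : z.toNat = (z - 1).toNat + 1 := by omega
    rw [h1, pow_succ]
    have hX := pow_nonneg hlam.1.le (z - 1).toNat
    have h2 : min lam mu * lam ≤ 1 := by nlinarith [hlam.2]
    calc min lam mu * (lam ^ (z-1).toNat * lam)
        = (min lam mu * lam) * lam ^ (z-1).toNat := by ring
      _ ≤ 1 * lam ^ (z-1).toNat := mul_le_mul_of_nonneg_right h2 hX
      _ = lam ^ (z-1).toNat := one_mul _

lemma chain (hlam : lam ∈ Set.Ioo (0:ℝ) 1) (hmu : mu ∈ Set.Ioo (0:ℝ) 1) (n : ℕ) :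
    ∀ x y : ℤ, (x - y).natAbs = n →
      (min lam mu) ^ n * gfun lam mu x ≤ gfun lam mu y := by
  have hm0 : 0 < min lam mu := lt_min hlam.1 hmu.1
  induction n with
  | zero =>
    intro x y h
    have : x = y := by omega
    subst this; simp
  | succ n ih =>
    intro x y h
    rcases lt_trichotomy x y with hxy | hxy | hxy
    · calc (min lam mu) ^ (n + 1) * gfun lam mu x
          = (min lam mu) ^ n * (min lam mu * gfun lam mu x) := by ring
        _ ≤ (min lam mu) ^ n * gfun lam mu (x + 1) :=
            mul_le_mul_of_nonneg_left (step_up hlam hmu x) (pow_nonneg hm0.le n)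
        _ ≤ gfun lam mu y := ih (x + 1) y (by omega)
    · omega
    · calc (min lam mu) ^ (n + 1) * gfun lam mu x
          = (min lam mu) ^ n * (min lam mu * gfun lam mu x) := by ring
        _ ≤ (min lam mu) ^ n * gfun lam mu (x - 1) :=
            mul_le_mul_of_nonneg_left (step_down hlam hmu x) (pow_nonneg hm0.le n)
        _ ≤ gfun lam mu y := ih (x - 1) y (by omega)

lemma chain_pmf (hlam : lam ∈ Set.Ioo (0:ℝ) 1) (hmu : mu ∈ Set.Ioo (0:ℝ) 1) (x y : ℤ) :
    (min lam mu) ^ (x - y).natAbs * skewDiscreteLaplacePMF lam mu x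
      ≤ skewDiscreteLaplacePMF lam mu y := by
  have h := chain hlam hmu (x - y).natAbs x y rfl
  have hC := C_pos hlam hmu
  unfold skewDiscreteLaplacePMF
  show (min lam mu) ^ (x - y).natAbs * ((1 - lam) * (1 - mu) / (1 - lam * mu) * gfun lam mu x)
      ≤ (1 - lam) * (1 - mu) / (1 - lam * mu) * gfun lam mu y
  calc (min lam mu) ^ (x - y).natAbs * ((1 - lam) * (1 - mu) / (1 - lam * mu) * gfun lam mu x)
      = (1 - lam) * (1 - mu) / (1 - lam * mu) * ((min lam mu) ^ (x - y).natAbs * gfun lam mu x) := by ring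
    _ ≤ (1 - lam) * (1 - mu) / (1 - lam * mu) * gfun lam mu y :=
        mul_le_mul_of_nonneg_left h hC.le

end SDLaux

/-- The skew discrete Laplace mechanism is edge differentially private with
`ε = -Δ log(min(lam, mu))`. -/
theorem skew_discrete_laplace_mechanism_edge_DP
    {Ω : Type*} [MeasurableSpace Ω] (P : Measure Ω) [IsProbabilityMeasure P]
    (k : ℕ) (lam mu : ℝ) (hlam : lam ∈ Set.Ioo (0 : ℝ) 1) (hmu : mu ∈ Set.Ioo (0 : ℝ) 1)
    (Z : Fin k → Ω → ℤ) (hmeas : ∀ i, Measurable (Z i))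
    (hpmf : ∀ i (z : ℤ), P {ω | Z i ω = z} = ENNReal.ofReal (skewDiscreteLaplacePMF lam mu z))
    (hindep : iIndepFun Z P)
    (Δ : ℝ) (hΔ : 0 < Δ) (ε : ℝ) (hε : ε = -Δ * Real.log (min lam mu)) :
    (∀ a b s : Fin k → ℤ, (∑ i, |((a i : ℝ) - (b i : ℝ))|) ≤ Δ →
      (∏ i, skewDiscreteLaplacePMF lam mu (s i - a i))
        ≤ Real.exp ε * ∏ i, skewDiscreteLaplacePMF lam mu (s i - b i)) ∧
    (∀ (V : Type) [Fintype V] (f : SimpleGraph V → (Fin k → ℤ)),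
      (∀ G G' : SimpleGraph V, (symmDiff G.edgeSet G'.edgeSet).ncard = 1 →
        (∑ i, |((f G i : ℝ) - (f G' i : ℝ))|) ≤ Δ) →
      ∀ G G' : SimpleGraph V, (symmDiff G.edgeSet G'.edgeSet).ncard = 1 →
        ∀ S : Set (Fin k → ℤ),
          P {ω | (fun i => f G i + Z i ω) ∈ S}
            ≤ ENNReal.ofReal (Real.exp ε) * P {ω | (fun i => f G' i + Z i ω) ∈ S}) := by
  have hm0 : 0 < min lam mu := lt_min hlam.1 hmu.1
  have hm1 : min lam mu < 1 := min_lt_iff.mpr (Or.inl hlam.2)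
  -- Part 1
  have h1 : ∀ a b s : Fin k → ℤ, (∑ i, |((a i : ℝ) - (b i : ℝ))|) ≤ Δ →
      (∏ i, skewDiscreteLaplacePMF lam mu (s i - a i))
        ≤ Real.exp ε * ∏ i, skewDiscreteLaplacePMF lam mu (s i - b i) := by
    intro a b s hab
    set m := min lam mu with hmdef
    set N : ℕ := ∑ i, ((s i - a i) - (s i - b i)).natAbs with hN
    have key : m ^ N * ∏ i, skewDiscreteLaplacePMF lam mu (s i - a i)
        ≤ ∏ i, skewDiscreteLaplacePMF lam mu (s i - b i) := by
      rw [hN, ← Finset.prod_pow_eq_pow_sum, ← Finset.prod_mul_distrib]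
      apply Finset.prod_le_prod
      · intro i _
        exact mul_nonneg (pow_nonneg hm0.le _) (SDLaux.pmf_pos hlam hmu _).le
      · intro i _
        exact SDLaux.chain_pmf hlam hmu _ _
    have hNΔ : (N : ℝ) ≤ Δ := by
      have : (N : ℝ) = ∑ i, |((a i : ℝ) - (b i : ℝ))| := by
        rw [hN]
        push_cast
        apply Finset.sum_congr rfl
        intro i _
        rw [Nat.cast_natAbs]
        push_cast
        rw [show ((s i : ℝ) - a i - (s i - b i)) = -((a i : ℝ) - b i) by ring, abs_neg]
      rw [this]; exact hab
    have hexp : ((m ^ N : ℝ))⁻¹ ≤ Real.exp ε := by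
      have e1 : Real.exp ε = m ^ (-Δ : ℝ) := by
        rw [hε, Real.rpow_def_of_pos hm0]; ring_nf
      have e2 : ((m ^ N : ℝ))⁻¹ = m ^ (-(N:ℝ) : ℝ) := by
        rw [← Real.rpow_natCast m N, ← Real.rpow_neg hm0.le]
      rw [e1, e2]
      exact Real.rpow_le_rpow_of_exponent_ge hm0 hm1.le (by linarith)
    have hprodb : 0 ≤ ∏ i, skewDiscreteLaplacePMF lam mu (s i - b i) :=
      Finset.prod_nonneg fun i _ => (SDLaux.pmf_pos hlam hmu _).le
    have hmN : 0 < m ^ N := pow_pos hm0 N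
    calc ∏ i, skewDiscreteLaplacePMF lam mu (s i - a i)
        = (m ^ N)⁻¹ * (m ^ N * ∏ i, skewDiscreteLaplacePMF lam mu (s i - a i)) := by
          field_simp
      _ ≤ (m ^ N)⁻¹ * ∏ i, skewDiscreteLaplacePMF lam mu (s i - b i) :=
          mul_le_mul_of_nonneg_left key (inv_nonneg.mpr hmN.le)
      _ ≤ Real.exp ε * ∏ i, skewDiscreteLaplacePMF lam mu (s i - b i) :=
          mul_le_mul_of_nonneg_right hexp hprodb
  refine ⟨h1, ?_⟩
  intro V _ f hf G G' hGG' S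
  -- measure of shifted event as a tsum
  have key2 : ∀ c : Fin k → ℤ, P {ω | (fun i => c i + Z i ω) ∈ S}
      = ∑' s : S, ENNReal.ofReal (∏ i, skewDiscreteLaplacePMF lam mu (s.1 i - c i)) := by
    intro c
    have hset : {ω | (fun i => c i + Z i ω) ∈ S}
        = ⋃ s ∈ S, ⋂ i, Z i ⁻¹' {s i - c i} := by
      ext ω
      simp only [Set.mem_setOf_eq, Set.mem_iUnion, Set.mem_iInter, Set.mem_preimage,
        Set.mem_singleton_iff]
      constructor
      · intro h
        exact ⟨_, h, fun i => by ring⟩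
      · rintro ⟨s, hs, h⟩
        have : (fun i => c i + Z i ω) = s := by
          funext i; rw [h i]; ring
        rw [this]; exact hs
    have hdisj : S.PairwiseDisjoint (fun s => ⋂ i, Z i ⁻¹' {s i - c i}) := by
      intro s hs t ht hst
      refine Set.disjoint_left.mpr fun ω hω1 hω2 => hst ?_
      funext i
      simp only [Set.mem_iInter, Set.mem_preimage, Set.mem_singleton_iff] at hω1 hω2
      have := (hω1 i).symm.trans (hω2 i)
      omega
    have hmeas' : ∀ s ∈ S, MeasurableSet (⋂ i, Z i ⁻¹' {s i - c i}) :=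
      fun s _ => MeasurableSet.iInter fun i => hmeas i (measurableSet_singleton _)
    rw [hset, measure_biUnion (Set.to_countable S) hdisj hmeas']
    apply tsum_congr
    intro s
    have hind := hindep.measure_inter_preimage_eq_mul Finset.univ
      (sets := fun i => {s.1 i - c i}) (fun i _ => measurableSet_singleton _)
    have huniv : (⋂ i ∈ Finset.univ, Z i ⁻¹' {s.1 i - c i}) = ⋂ i, Z i ⁻¹' {s.1 i - c i} := by
      simp
    rw [← huniv, hind]
    rw [ENNReal.ofReal_prod_of_nonneg (fun i _ => (SDLaux.pmf_pos hlam hmu _).le)]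
    apply Finset.prod_congr rfl
    intro i _
    rw [← hpmf i (s.1 i - c i)]
    rfl
  rw [key2 (f G), key2 (f G'), ← ENNReal.tsum_mul_left]
  apply ENNReal.tsum_le_tsum
  intro s
  rw [← ENNReal.ofReal_mul (Real.exp_nonneg ε)]
  exact ENNReal.ofReal_le_ofReal (h1 (f G) (f G') s.1 (hf G G' hGG'))
end

section
/- Fix an integer q ≥ 2 and let u(t) = (Σ_{a=0}^{q−1} a e^{at})/(Σ_{k=0}^{q−1} e^{kt}) for t ∈ ℝ. Then for all t ∈ ℝ, the second derivative satisfies |u″(t)| ≤ (q−1)³. Consequently, in the generalized β-model with F_i(α) = d̄_i − Σ_{j≠i} u(α_i + α_j), the second partial derivatives satisfy |∂²F_i/∂α_i²| ≤ (q−1)³(n−1) and |∂²F_i/∂α_j∂α_i| ≤ (q−1)³ for j ≠ i, at every α ∈ ℝⁿ. -/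
open Finset

/-- The mean function of the generalized β-model edge-weight distribution:
`u(t) = (Σ_{a=0}^{q-1} a e^{a t}) / (Σ_{k=0}^{q-1} e^{k t})`. -/
noncomputable def uq (q : ℕ) (t : ℝ) : ℝ :=
  (∑ a ∈ Finset.range q, (a : ℝ) * Real.exp (a * t)) /
    ∑ k ∈ Finset.range q, Real.exp (k * t)

/-- Partial derivative of `f : (Fin n → ℝ) → ℝ` in the `j`-th coordinate at `x`. -/
noncomputable def pderiv' {n : ℕ} (j : Fin n) (f : (Fin n → ℝ) → ℝ) (x : Fin n → ℝ) : ℝ :=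
  deriv (fun s => f (Function.update x j s)) (x j)

noncomputable def Sq (q m : ℕ) (t : ℝ) : ℝ :=
  ∑ a ∈ Finset.range q, (a : ℝ) ^ m * Real.exp (a * t)

lemma hasDerivAt_Sq (q m : ℕ) (t : ℝ) : HasDerivAt (Sq q m) (Sq q (m+1) t) t := by
  have : HasDerivAt (fun t => ∑ a ∈ Finset.range q, (a : ℝ) ^ m * Real.exp (a * t))
      (∑ a ∈ Finset.range q, (a : ℝ) ^ (m+1) * Real.exp (a * t)) t := by
    refine HasDerivAt.fun_sum fun a _ => ?_
    have h1 : HasDerivAt (fun y : ℝ => (a : ℝ) * y) ((a : ℝ) * 1) t :=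
      (hasDerivAt_id t).const_mul _
    have h2 := (h1.exp).const_mul ((a : ℝ) ^ m)
    refine h2.congr_deriv ?_
    ring
  exact this

lemma Sq0_pos (q : ℕ) (hq : 1 ≤ q) (t : ℝ) : 0 < Sq q 0 t := by
  refine Finset.sum_pos (fun a _ => ?_) (Finset.nonempty_range_iff.mpr (by omega))
  simp [Real.exp_pos]

lemma uq_eq_Sq (q : ℕ) : uq q = fun t => Sq q 1 t / Sq q 0 t := by
  funext t
  simp [uq, Sq]

noncomputable def Vq (q : ℕ) (t : ℝ) : ℝ :=
  (Sq q 2 t * Sq q 0 t - (Sq q 1 t) ^ 2) / (Sq q 0 t) ^ 2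

noncomputable def Wq (q : ℕ) (t : ℝ) : ℝ :=
  (∑ a ∈ Finset.range q, ((a : ℝ) - Sq q 1 t / Sq q 0 t) ^ 3 * Real.exp (a * t)) / Sq q 0 t

lemma hasDerivAt_uq (q : ℕ) (hq : 1 ≤ q) (t : ℝ) : HasDerivAt (uq q) (Vq q t) t := by
  rw [uq_eq_Sq]
  have h := (hasDerivAt_Sq q 1 t).div (hasDerivAt_Sq q 0 t) (Sq0_pos q hq t).ne'
  refine h.congr_deriv ?_
  simp [Vq]
  ring

lemma deriv_uq (q : ℕ) (hq : 1 ≤ q) : deriv (uq q) = Vq q :=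
  funext fun t => (hasDerivAt_uq q hq t).deriv

lemma centered_sum (q : ℕ) (t : ℝ) :
    ∑ a ∈ Finset.range q, ((a : ℝ) - Sq q 1 t / Sq q 0 t) ^ 3 * Real.exp (a * t)
      = Sq q 3 t - 3 * (Sq q 1 t / Sq q 0 t) * Sq q 2 t
        + 3 * (Sq q 1 t / Sq q 0 t) ^ 2 * Sq q 1 t
        - (Sq q 1 t / Sq q 0 t) ^ 3 * Sq q 0 t := by
  set μ := Sq q 1 t / Sq q 0 t with hμ
  simp only [Sq, Finset.mul_sum]
  rw [← Finset.sum_sub_distrib, ← Finset.sum_add_distrib, ← Finset.sum_sub_distrib]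
  exact Finset.sum_congr rfl fun a _ => by ring

lemma hasDerivAt_Vq (q : ℕ) (hq : 1 ≤ q) (t : ℝ) : HasDerivAt (Vq q) (Wq q t) t := by
  have h0 := Sq0_pos q hq t
  have hN : HasDerivAt (fun t => Sq q 2 t * Sq q 0 t - (Sq q 1 t) ^ 2)
      (Sq q 3 t * Sq q 0 t + Sq q 2 t * Sq q 1 t - 2 * Sq q 1 t ^ (2-1) * Sq q 2 t) t := by
    exact ((hasDerivAt_Sq q 2 t).mul (hasDerivAt_Sq q 0 t)).sub ((hasDerivAt_Sq q 1 t).pow 2)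
  have hD : HasDerivAt (fun t => (Sq q 0 t) ^ 2) (2 * Sq q 0 t ^ (2-1) * Sq q 1 t) t :=
    (hasDerivAt_Sq q 0 t).pow 2
  have h := hN.div hD (by positivity)
  refine h.congr_deriv ?_
  rw [Wq, centered_sum]
  field_simp
  ring

lemma abs_Wq_le (q : ℕ) (hq : 2 ≤ q) (t : ℝ) : |Wq q t| ≤ ((q : ℝ) - 1) ^ 3 := by
  have h0 := Sq0_pos q (by omega) t
  have hq1 : (0:ℝ) ≤ (q : ℝ) - 1 := by
    have : (2:ℝ) ≤ q := by exact_mod_cast hq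
    linarith
  set μ := Sq q 1 t / Sq q 0 t with hμ
  have hμ0 : 0 ≤ μ := by
    apply div_nonneg _ h0.le
    apply Finset.sum_nonneg
    intro a _
    positivity
  have hμ1 : μ ≤ (q : ℝ) - 1 := by
    rw [hμ, div_le_iff₀ h0]
    have : Sq q 1 t ≤ ∑ a ∈ Finset.range q, ((q:ℝ) - 1) * ((a:ℝ)^0 * Real.exp (a * t)) := by
      refine Finset.sum_le_sum fun a ha => ?_
      have ha' : (a:ℝ) + 1 ≤ q := by exact_mod_cast Finset.mem_range.mp ha
      have he : (0:ℝ) < Real.exp (a * t) := Real.exp_pos _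
      simp only [pow_one, pow_zero, one_mul]
      nlinarith
    calc Sq q 1 t ≤ _ := this
      _ = ((q:ℝ) - 1) * Sq q 0 t := by rw [Sq, ← Finset.mul_sum]
  rw [Wq, ← hμ, abs_div, abs_of_pos h0, div_le_iff₀ h0]
  calc |∑ a ∈ Finset.range q, ((a : ℝ) - μ) ^ 3 * Real.exp (a * t)|
      ≤ ∑ a ∈ Finset.range q, |((a : ℝ) - μ) ^ 3 * Real.exp (a * t)| :=
        Finset.abs_sum_le_sum_abs _ _
    _ ≤ ∑ a ∈ Finset.range q, ((q:ℝ) - 1) ^ 3 * Real.exp (a * t) := by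
        refine Finset.sum_le_sum fun a ha => ?_
        rw [abs_mul, abs_of_pos (Real.exp_pos _), abs_pow]
        refine mul_le_mul_of_nonneg_right ?_ (Real.exp_pos _).le
        refine pow_le_pow_left₀ (abs_nonneg _) ?_ 3
        have ha' : (a:ℝ) + 1 ≤ q := by exact_mod_cast Finset.mem_range.mp ha
        rw [abs_le]
        constructor <;> nlinarith
    _ = ((q:ℝ) - 1) ^ 3 * Sq q 0 t := by
        rw [← Finset.mul_sum]
        congr 1
        simp [Sq]

lemma deriv_deriv_uq (q : ℕ) (hq : 2 ≤ q) (t : ℝ) :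
    deriv (deriv (uq q)) t = Wq q t := by
  rw [deriv_uq q (by omega)]
  exact (hasDerivAt_Vq q (by omega) t).deriv

lemma pderiv_F (q : ℕ) (hq : 2 ≤ q) {n : ℕ} (dbar : Fin n → ℝ) (i : Fin n) :
    pderiv' i (fun x => dbar i - ∑ j ∈ Finset.univ.erase i, uq q (x i + x j))
      = fun x => -∑ j ∈ Finset.univ.erase i, Vq q (x i + x j) := by
  funext x
  unfold pderiv'
  have hfun : (fun s => (fun x => dbar i - ∑ j ∈ Finset.univ.erase i, uq q (x i + x j))
        (Function.update x i s))
      = fun s => dbar i - ∑ j ∈ Finset.univ.erase i, uq q (s + x j) := by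
    funext s
    simp only
    congr 1
    refine Finset.sum_congr rfl fun j hj => ?_
    rw [Function.update_self, Function.update_of_ne (Finset.mem_erase.mp hj).1]
  rw [hfun]
  have hd : HasDerivAt (fun s => dbar i - ∑ j ∈ Finset.univ.erase i, uq q (s + x j))
      (0 - ∑ j ∈ Finset.univ.erase i, Vq q (x i + x j)) (x i) := by
    refine (hasDerivAt_const _ _).sub (HasDerivAt.fun_sum fun j _ => ?_)
    have h := (hasDerivAt_uq q (by omega) (x i + x j)).comp (x i)
      ((hasDerivAt_id (x i)).add_const (x j))
    simpa [Function.comp_def] using h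
  rw [hd.deriv]
  ring


/-- `|u″(t)| ≤ (q-1)³` for all `t`; consequently, for
`F_i(α) = d̄_i - Σ_{j≠i} u(α_i + α_j)`, the second partial derivatives satisfy
`|∂²F_i/∂α_i²| ≤ (q-1)³(n-1)` and `|∂²F_i/∂α_j∂α_i| ≤ (q-1)³` for `j ≠ i`, at every `α`. -/
theorem second_derivative_bounds (q : ℕ) (hq : 2 ≤ q) :
    (∀ t : ℝ, |deriv (deriv (uq q)) t| ≤ ((q : ℝ) - 1) ^ 3) ∧
    ∀ (n : ℕ) (dbar : Fin n → ℝ) (i : Fin n) (α : Fin n → ℝ),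
      |pderiv' i (pderiv' i
          (fun x => dbar i - ∑ j ∈ Finset.univ.erase i, uq q (x i + x j))) α|
        ≤ ((q : ℝ) - 1) ^ 3 * ((n : ℝ) - 1) ∧
      ∀ j : Fin n, j ≠ i →
        |pderiv' j (pderiv' i
            (fun x => dbar i - ∑ j' ∈ Finset.univ.erase i, uq q (x i + x j'))) α|
          ≤ ((q : ℝ) - 1) ^ 3 := by
  have hq1 : (1:ℕ) ≤ q := by omega
  have hWb := abs_Wq_le q hq
  constructor
  · intro t
    rw [deriv_deriv_uq q hq t]
    exact hWb t
  intro n dbar i α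
  rw [pderiv_F q hq dbar i]
  constructor
  · -- second derivative in i
    unfold pderiv'
    have hfun : (fun s => (fun x => -∑ j ∈ Finset.univ.erase i, Vq q (x i + x j))
          (Function.update α i s))
        = fun s => -∑ j ∈ Finset.univ.erase i, Vq q (s + α j) := by
      funext s
      simp only [neg_inj]
      refine Finset.sum_congr rfl fun j hj => ?_
      rw [Function.update_self, Function.update_of_ne (Finset.mem_erase.mp hj).1]
    rw [hfun]
    have hd : HasDerivAt (fun s => -∑ j ∈ Finset.univ.erase i, Vq q (s + α j))
        (-∑ j ∈ Finset.univ.erase i, Wq q (α i + α j)) (α i) := by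
      refine HasDerivAt.neg (HasDerivAt.fun_sum fun j _ => ?_)
      have h := (hasDerivAt_Vq q hq1 (α i + α j)).comp (α i)
        ((hasDerivAt_id (α i)).add_const (α j))
      simpa [Function.comp_def] using h
    rw [hd.deriv, abs_neg]
    calc |∑ j ∈ Finset.univ.erase i, Wq q (α i + α j)|
        ≤ ∑ j ∈ Finset.univ.erase i, |Wq q (α i + α j)| := Finset.abs_sum_le_sum_abs _ _
      _ ≤ ∑ _j ∈ Finset.univ.erase i, ((q:ℝ) - 1) ^ 3 :=
          Finset.sum_le_sum fun j _ => hWb _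
      _ = ((q:ℝ) - 1) ^ 3 * ((n:ℝ) - 1) := by
          rw [Finset.sum_const, nsmul_eq_mul, mul_comm]
          congr 1
          rw [Finset.card_erase_of_mem (Finset.mem_univ i), Finset.card_univ, Fintype.card_fin]
          have hn : 1 ≤ n := i.pos
          push_cast [Nat.cast_sub hn]
          ring
  · -- mixed derivative
    intro j hji
    unfold pderiv'
    have hfun : (fun s => (fun x => -∑ k ∈ Finset.univ.erase i, Vq q (x i + x k))
          (Function.update α j s))
        = fun s => -∑ k ∈ Finset.univ.erase i,
            (if k = j then Vq q (α i + s) else Vq q (α i + α k)) := by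
      funext s
      simp only [neg_inj]
      refine Finset.sum_congr rfl fun k hk => ?_
      rw [Function.update_of_ne (Ne.symm hji)]
      by_cases h : k = j
      · subst h; rw [Function.update_self, if_pos rfl]
      · rw [Function.update_of_ne h, if_neg h]
    rw [hfun]
    have hd : HasDerivAt (fun s => -∑ k ∈ Finset.univ.erase i,
          (if k = j then Vq q (α i + s) else Vq q (α i + α k)))
        (-∑ k ∈ Finset.univ.erase i, (if k = j then Wq q (α i + α j) else 0)) (α j) := by
      refine HasDerivAt.neg (HasDerivAt.fun_sum fun k _ => ?_)
      by_cases h : k = j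
      · subst h
        simp only [if_pos rfl]
        have hc := (hasDerivAt_Vq q hq1 (α i + α k)).comp (α k)
          ((hasDerivAt_id (α k)).const_add (α i))
        simpa [Function.comp_def] using hc
      · simp only [if_neg h]
        exact hasDerivAt_const _ _
    rw [hd.deriv, abs_neg]
    rw [Finset.sum_ite_eq' (Finset.univ.erase i) j fun _ => Wq q (α i + α j)]
    rw [if_pos (Finset.mem_erase.mpr ⟨hji, Finset.mem_univ j⟩)]
    exact hWb _
end

section
/- In the generalized β-model, the Jacobian F′ of the system F(α) = (F_1(α),…,F_n(α))ᵀ with F_i(α) = d̄_i − Σ_{j≠i} u(α_i + α_j) is Lipschitz continuous with respect to the max norm with Lipschitz constant κ = 4(q−1)³(n−1): for all x, y ∈ ℝⁿ and all v ∈ ℝⁿ, ‖(F′(x) − F′(y))v‖_∞ ≤ 4(q−1)³(n−1)‖x − y‖_∞‖v‖_∞. -/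
open Finset

namespace JacLipAux

/-- Exponential moment sums `S q m t = Σ_{k<q} k^m e^{kt}`. -/
noncomputable def S (q m : ℕ) (t : ℝ) : ℝ :=
  ∑ k ∈ Finset.range q, (k : ℝ) ^ m * Real.exp (k * t)

lemma S_def (q m : ℕ) (t : ℝ) :
    S q m t = ∑ k ∈ Finset.range q, (k : ℝ) ^ m * Real.exp (k * t) := rfl

lemma hasDerivAt_S (q m : ℕ) (t : ℝ) : HasDerivAt (S q m) (S q (m+1) t) t := by
  have h : ∀ k ∈ Finset.range q,
      HasDerivAt (fun t => (k : ℝ) ^ m * Real.exp (k * t))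
        ((k : ℝ) ^ (m+1) * Real.exp (k * t)) t := by
    intro k _
    have h1 : HasDerivAt (fun t : ℝ => (k : ℝ) * t) (k : ℝ) t := by
      simpa using (hasDerivAt_id t).const_mul (k : ℝ)
    have h2 := (h1.exp).const_mul ((k : ℝ) ^ m)
    exact h2.congr_deriv (by ring)
  exact HasDerivAt.fun_sum h

lemma S0_pos (q : ℕ) (hq : 1 ≤ q) (t : ℝ) : 0 < S q 0 t := by
  apply Finset.sum_pos
  · intro k _; positivity
  · exact Finset.nonempty_range_iff.mpr (by omega)

lemma S1_nonneg (q : ℕ) (t : ℝ) : 0 ≤ S q 1 t := by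
  apply Finset.sum_nonneg
  intro k _; positivity

lemma S1_le (q : ℕ) (t : ℝ) : S q 1 t ≤ ((q : ℝ) - 1) * S q 0 t := by
  rw [S_def, S_def, Finset.mul_sum]
  apply Finset.sum_le_sum
  intro k hk
  have hkq : k < q := Finset.mem_range.mp hk
  have hk' : (k : ℝ) ≤ (q : ℝ) - 1 := by
    have : (k : ℝ) + 1 ≤ (q : ℝ) := by exact_mod_cast hkq
    linarith
  have he := Real.exp_pos ((k : ℝ) * t)
  simp only [pow_one, pow_zero, one_mul]
  nlinarith

/-- `g = u'`. -/
noncomputable def g (q : ℕ) (t : ℝ) : ℝ :=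
  (S q 2 t * S q 0 t - (S q 1 t) ^ 2) / (S q 0 t) ^ 2

lemma uq_eq (q : ℕ) : uq q = fun t => S q 1 t / S q 0 t := by
  funext t
  simp [uq, S, pow_one, pow_zero]

lemma hasDerivAt_uq (q : ℕ) (hq : 1 ≤ q) (t : ℝ) : HasDerivAt (uq q) (g q t) t := by
  rw [uq_eq]
  have h := (hasDerivAt_S q 1 t).div (hasDerivAt_S q 0 t) (S0_pos q hq t).ne'
  exact h.congr_deriv (by simp only [g]; ring)

lemma deriv_uq (q : ℕ) (hq : 1 ≤ q) : deriv (uq q) = g q :=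
  funext fun t => (hasDerivAt_uq q hq t).deriv

lemma hasDerivAt_g (q : ℕ) (hq : 1 ≤ q) (t : ℝ) :
    HasDerivAt (g q)
      ((S q 3 t * (S q 0 t) ^ 2 - 3 * S q 1 t * S q 2 t * S q 0 t + 2 * (S q 1 t) ^ 3)
        / (S q 0 t) ^ 3) t := by
  have h0 := S0_pos q hq t
  have hnum : HasDerivAt (fun t => S q 2 t * S q 0 t - (S q 1 t) ^ 2)
      (S q 3 t * S q 0 t + S q 2 t * S q 1 t - 2 * S q 1 t * S q 2 t) t := by
    have h := ((hasDerivAt_S q 2 t).mul (hasDerivAt_S q 0 t)).sub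
      ((hasDerivAt_S q 1 t).pow 2)
    exact h.congr_deriv (by ring)
  have hden : HasDerivAt (fun t => (S q 0 t) ^ 2) (2 * S q 0 t * S q 1 t) t := by
    have h := (hasDerivAt_S q 0 t).pow 2
    exact h.congr_deriv (by ring)
  have h := hnum.div hden (pow_ne_zero 2 h0.ne')
  exact h.congr_deriv (by field_simp; ring)

lemma key_identity (q : ℕ) (t : ℝ) :
    (∑ k ∈ Finset.range q, Real.exp (k * t) * ((k : ℝ) * S q 0 t - S q 1 t) ^ 3)
      = (S q 3 t * (S q 0 t) ^ 2 - 3 * S q 1 t * S q 2 t * S q 0 t + 2 * (S q 1 t) ^ 3)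
        * S q 0 t := by
  have hexp : ∀ k ∈ Finset.range q,
      Real.exp (k * t) * ((k : ℝ) * S q 0 t - S q 1 t) ^ 3
        = (S q 0 t) ^ 3 * ((k : ℝ) ^ 3 * Real.exp (k * t))
          - 3 * (S q 0 t) ^ 2 * S q 1 t * ((k : ℝ) ^ 2 * Real.exp (k * t))
          + 3 * S q 0 t * (S q 1 t) ^ 2 * ((k : ℝ) ^ 1 * Real.exp (k * t))
          - (S q 1 t) ^ 3 * ((k : ℝ) ^ 0 * Real.exp (k * t)) := by
    intro k _; ring
  rw [Finset.sum_congr rfl hexp]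
  simp only [Finset.sum_sub_distrib, Finset.sum_add_distrib, ← Finset.mul_sum, ← S_def]
  ring

lemma abs_derivg_le (q : ℕ) (hq : 1 ≤ q) (t : ℝ) :
    |(S q 3 t * (S q 0 t) ^ 2 - 3 * S q 1 t * S q 2 t * S q 0 t + 2 * (S q 1 t) ^ 3)
        / (S q 0 t) ^ 3| ≤ ((q : ℝ) - 1) ^ 3 := by
  have h0 := S0_pos q hq t
  have hq1 : (0 : ℝ) ≤ (q : ℝ) - 1 := by
    have : (1 : ℝ) ≤ (q : ℝ) := by exact_mod_cast hq
    linarith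
  set A := S q 0 t with hA
  set B := S q 1 t with hB
  have hB0 : 0 ≤ B := S1_nonneg q t
  have hB1 : B ≤ ((q : ℝ) - 1) * A := S1_le q t
  set N := S q 3 t * A ^ 2 - 3 * B * S q 2 t * A + 2 * B ^ 3 with hN
  have hsum : |N * A| ≤ ((q : ℝ) - 1) ^ 3 * A ^ 3 * A := by
    rw [← key_identity q t]
    calc |∑ k ∈ Finset.range q, Real.exp (k * t) * ((k : ℝ) * A - B) ^ 3|
        ≤ ∑ k ∈ Finset.range q, |Real.exp (k * t) * ((k : ℝ) * A - B) ^ 3| :=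
          Finset.abs_sum_le_sum_abs _ _
      _ ≤ ∑ k ∈ Finset.range q, Real.exp (k * t) * (((q : ℝ) - 1) * A) ^ 3 := by
          apply Finset.sum_le_sum
          intro k hk
          have hkq : k < q := Finset.mem_range.mp hk
          have hk' : (k : ℝ) ≤ (q : ℝ) - 1 := by
            have : (k : ℝ) + 1 ≤ (q : ℝ) := by exact_mod_cast hkq
            linarith
          have habs : |(k : ℝ) * A - B| ≤ ((q : ℝ) - 1) * A := by
            rw [abs_le]
            constructor
            · have h1 : 0 ≤ (k : ℝ) * A := by positivity
              nlinarith
            · nlinarith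
          rw [abs_mul, abs_pow, abs_of_pos (Real.exp_pos _)]
          have := pow_le_pow_left₀ (abs_nonneg ((k : ℝ) * A - B)) habs 3
          nlinarith [Real.exp_pos ((k : ℝ) * t)]
      _ = (((q : ℝ) - 1) * A) ^ 3 * ∑ k ∈ Finset.range q, Real.exp (k * t) := by
          rw [Finset.mul_sum]
          exact Finset.sum_congr rfl fun k _ => mul_comm _ _
      _ = ((q : ℝ) - 1) ^ 3 * A ^ 3 * A := by
          have : ∑ k ∈ Finset.range q, Real.exp (k * t) = A := by
            rw [hA, S_def]; simp
          rw [this]; ring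
  have hNle : |N| ≤ ((q : ℝ) - 1) ^ 3 * A ^ 3 := by
    have h := hsum
    rw [abs_mul, abs_of_pos h0] at h
    exact le_of_mul_le_mul_right (by linarith) h0
  rw [abs_div, abs_of_pos (by positivity : (0:ℝ) < A ^ 3), div_le_iff₀ (by positivity)]
  calc |N| ≤ ((q : ℝ) - 1) ^ 3 * A ^ 3 := hNle
    _ = ((q : ℝ) - 1) ^ 3 * A ^ 3 := rfl

lemma g_lip (q : ℕ) (hq : 1 ≤ q) (s t : ℝ) :
    |g q s - g q t| ≤ ((q : ℝ) - 1) ^ 3 * |s - t| := by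
  have h := Convex.norm_image_sub_le_of_norm_hasDerivWithin_le
    (f := g q)
    (f' := fun t => (S q 3 t * (S q 0 t) ^ 2 - 3 * S q 1 t * S q 2 t * S q 0 t
        + 2 * (S q 1 t) ^ 3) / (S q 0 t) ^ 3)
    (C := ((q : ℝ) - 1) ^ 3) (s := Set.univ)
    (fun x _ => (hasDerivAt_g q hq x).hasDerivWithinAt)
    (fun x _ => by rw [Real.norm_eq_abs]; exact abs_derivg_le q hq x)
    convex_univ (Set.mem_univ t) (Set.mem_univ s)
  simpa [Real.norm_eq_abs] using h

end JacLipAux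

/-- The Jacobian `J = F′` of the system `F_i(α) = d̄_i - Σ_{j≠i} u(α_i + α_j)`,
with entries `∂F_i/∂α_i = -Σ_{j≠i} u′(α_i+α_j)` and `∂F_i/∂α_j = -u′(α_i+α_j)` for `j ≠ i`,
is Lipschitz continuous w.r.t. the max norm (the sup norm on `Fin n → ℝ`) with constant
`κ = 4(q-1)³(n-1)`. -/
theorem jacobian_lipschitz (q n : ℕ) (hq : 2 ≤ q)
    (J : (Fin n → ℝ) → Matrix (Fin n) (Fin n) ℝ)
    (hJ : ∀ (α : Fin n → ℝ) (i j : Fin n),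
      J α i j = if i = j then -∑ j' ∈ Finset.univ.erase i, deriv (uq q) (α i + α j')
                else -deriv (uq q) (α i + α j)) :
    ∀ x y v : Fin n → ℝ,
      ‖(J x - J y).mulVec v‖ ≤ 4 * ((q : ℝ) - 1) ^ 3 * ((n : ℝ) - 1) * ‖x - y‖ * ‖v‖ := by
  intro x y v
  have hq1 : 1 ≤ q := by omega
  have hqR : (1 : ℝ) ≤ (q : ℝ) - 1 := by
    have : (2 : ℝ) ≤ (q : ℝ) := by exact_mod_cast hq
    linarith
  have hC0 : (0 : ℝ) ≤ ((q : ℝ) - 1) ^ 3 := by positivity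
  rcases Nat.eq_zero_or_pos n with hn | hn
  · subst hn
    have h1 : (J x - J y).mulVec v = 0 := funext fun i => i.elim0
    have h2 : x = y := funext fun i => i.elim0
    have hv : v = 0 := funext fun i => i.elim0
    rw [h1, h2, hv]
    simp only [norm_zero, sub_self, mul_zero]
    exact le_rfl
  · -- n ≥ 1
    have hnR : (0 : ℝ) ≤ (n : ℝ) - 1 := by
      have : (1 : ℝ) ≤ (n : ℝ) := by exact_mod_cast hn
      linarith
    set C := ((q : ℝ) - 1) ^ 3 with hCdef
    set L := 2 * C * ‖x - y‖ with hLdef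
    have hL0 : 0 ≤ L := by positivity
    -- entry Lipschitz bound
    have hent : ∀ s t : ℝ, |s - t| ≤ 2 * ‖x - y‖ →
        |deriv (uq q) s - deriv (uq q) t| ≤ L := by
      intro s t hst
      rw [JacLipAux.deriv_uq q hq1]
      calc |JacLipAux.g q s - JacLipAux.g q t| ≤ C * |s - t| :=
            JacLipAux.g_lip q hq1 s t
        _ ≤ C * (2 * ‖x - y‖) := by
            apply mul_le_mul_of_nonneg_left hst hC0
        _ = L := by rw [hLdef]; ring
    have hcoord : ∀ i j : Fin n,
        |deriv (uq q) (x i + x j) - deriv (uq q) (y i + y j)| ≤ L := by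
      intro i j
      apply hent
      have hi : |x i - y i| ≤ ‖x - y‖ := by
        simpa [Real.norm_eq_abs] using norm_le_pi_norm (x - y) i
      have hj : |x j - y j| ≤ ‖x - y‖ := by
        simpa [Real.norm_eq_abs] using norm_le_pi_norm (x - y) j
      calc |x i + x j - (y i + y j)| = |(x i - y i) + (x j - y j)| := by ring_nf
        _ ≤ |x i - y i| + |x j - y j| := abs_add_le _ _
        _ ≤ 2 * ‖x - y‖ := by linarith
    -- diagonal entries
    have hcard : ∀ i : Fin n, ((Finset.univ.erase i).card : ℝ) = (n : ℝ) - 1 := by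
      intro i
      rw [Finset.card_erase_of_mem (Finset.mem_univ i)]
      simp only [Finset.card_univ, Fintype.card_fin]
      rw [Nat.cast_sub hn]
      simp
    have hdiag : ∀ i : Fin n, |J x i i - J y i i| ≤ ((n : ℝ) - 1) * L := by
      intro i
      rw [hJ x i i, hJ y i i, if_pos rfl, if_pos rfl]
      have heq : -(∑ j' ∈ Finset.univ.erase i, deriv (uq q) (x i + x j'))
            - -(∑ j' ∈ Finset.univ.erase i, deriv (uq q) (y i + y j'))
          = -∑ j' ∈ Finset.univ.erase i,
              (deriv (uq q) (x i + x j') - deriv (uq q) (y i + y j')) := by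
        rw [Finset.sum_sub_distrib]; ring
      rw [heq, abs_neg]
      calc |∑ j' ∈ Finset.univ.erase i,
              (deriv (uq q) (x i + x j') - deriv (uq q) (y i + y j'))|
          ≤ ∑ j' ∈ Finset.univ.erase i,
              |deriv (uq q) (x i + x j') - deriv (uq q) (y i + y j')| :=
            Finset.abs_sum_le_sum_abs _ _
        _ ≤ ∑ _j' ∈ Finset.univ.erase i, L :=
            Finset.sum_le_sum fun j' _ => hcoord i j'
        _ = ((n : ℝ) - 1) * L := by
            rw [Finset.sum_const, nsmul_eq_mul, hcard i]
    have hoff : ∀ i j : Fin n, i ≠ j → |J x i j - J y i j| ≤ L := by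
      intro i j hij
      rw [hJ x i j, hJ y i j, if_neg hij, if_neg hij]
      have : -deriv (uq q) (x i + x j) - -deriv (uq q) (y i + y j)
          = -(deriv (uq q) (x i + x j) - deriv (uq q) (y i + y j)) := by ring
      rw [this, abs_neg]
      exact hcoord i j
    -- assemble
    have hrhs0 : 0 ≤ 4 * ((q : ℝ) - 1) ^ 3 * ((n : ℝ) - 1) * ‖x - y‖ * ‖v‖ := by
      apply mul_nonneg
      apply mul_nonneg
      apply mul_nonneg
      · linarith
      · exact hnR
      · exact norm_nonneg _
      · exact norm_nonneg _
    rw [pi_norm_le_iff_of_nonneg hrhs0]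
    intro i
    have hrow : ∑ j : Fin n, |J x i j - J y i j| ≤ 2 * ((n : ℝ) - 1) * L := by
      rw [← Finset.add_sum_erase Finset.univ _ (Finset.mem_univ i)]
      have h1 := hdiag i
      have h2 : ∑ j ∈ Finset.univ.erase i, |J x i j - J y i j|
          ≤ ((n : ℝ) - 1) * L := by
        calc ∑ j ∈ Finset.univ.erase i, |J x i j - J y i j|
            ≤ ∑ _j ∈ Finset.univ.erase i, L := by
              apply Finset.sum_le_sum
              intro j hj
              exact hoff i j (fun h => (Finset.mem_erase.mp hj).1 h.symm)
          _ = ((n : ℝ) - 1) * L := by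
              rw [Finset.sum_const, nsmul_eq_mul, hcard i]
      linarith
    calc ‖((J x - J y).mulVec v) i‖
        = |∑ j : Fin n, (J x i j - J y i j) * v j| := by
          simp [Matrix.mulVec, dotProduct, Matrix.sub_apply, Real.norm_eq_abs]
      _ ≤ ∑ j : Fin n, |(J x i j - J y i j) * v j| := Finset.abs_sum_le_sum_abs _ _
      _ ≤ ∑ j : Fin n, |J x i j - J y i j| * ‖v‖ := by
          apply Finset.sum_le_sum
          intro j _
          rw [abs_mul]
          apply mul_le_mul_of_nonneg_left _ (abs_nonneg _)
          simpa [Real.norm_eq_abs] using norm_le_pi_norm v j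
      _ = (∑ j : Fin n, |J x i j - J y i j|) * ‖v‖ := by rw [Finset.sum_mul]
      _ ≤ (2 * ((n : ℝ) - 1) * L) * ‖v‖ := by
          apply mul_le_mul_of_nonneg_right hrow (norm_nonneg _)
      _ = 4 * ((q : ℝ) - 1) ^ 3 * ((n : ℝ) - 1) * ‖x - y‖ * ‖v‖ := by
          rw [hLdef, hCdef]; ring
end
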